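/- arXiv:2204.08827 — 6 statements merged into one kernel-verified Lean document; each statement's English description precedes it below -/
import Mathlib

section
/- Under Assumptions (B1)–(B3), for every noise path Z (with some Hölder constant Λ > 0) there exists a unique pathwise solution, i.e. a unique continuous function Y : [0,T] → ℝ such that φ(t) < Y(t) < ψ(t) for all t ∈ [0,T] and Y(t) = Y(0) + ∫₀ᵗ b(s, Y(s)) ds + Z(t) for all t ∈ [0,T]. -/
set_option maxHeartbeats 1000000

open MeasureTheory Set Filter

private lemma holder_continuousOn {T lam K : ℝ} (hlam : 0 < lam) {f : ℝ → ℝ}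
    (hf : ∀ s ∈ Icc (0:ℝ) T, ∀ t ∈ Icc (0:ℝ) T, |f t - f s| ≤ K * |t - s| ^ lam) :
    ContinuousOn f (Icc (0:ℝ) T) := by
  intro s hs
  have hg : ContinuousAt (fun t : ℝ => K * |t - s| ^ lam) s := by
    apply Continuous.continuousAt
    exact continuous_const.mul (((continuous_id.sub continuous_const).abs).rpow_const
      (fun x => Or.inr hlam.le))
  have hg0 : (fun t : ℝ => K * |t - s| ^ lam) s = 0 := by
    simp [Real.zero_rpow (ne_of_gt hlam)]
  have htend : Tendsto (fun t : ℝ => K * |t - s| ^ lam) (nhdsWithin s (Icc 0 T)) (nhds 0) := by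
    rw [← hg0]
    exact (hg.continuousWithinAt).tendsto
  rw [ContinuousWithinAt, tendsto_iff_dist_tendsto_zero]
  apply squeeze_zero' (Filter.Eventually.of_forall (fun t => dist_nonneg)) _ htend
  filter_upwards [self_mem_nhdsWithin] with t ht
  rw [Real.dist_eq]
  exact hf s hs t ht

private lemma exists_delta0 {lam gam c2 B : ℝ} (hlam : lam ∈ Set.Ioo (0:ℝ) 1)
    (hgam : 1 / lam - 1 < gam) (hc2 : 0 < c2) (hB : 0 < B) :
    ∃ δ0 : ℝ, 0 < δ0 ∧ ∀ δ : ℝ, 0 < δ → δ ≤ δ0 → ∀ h : ℝ, 0 < h →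
      B * h ^ lam ≤ (c2 / δ ^ gam) * h + δ / 2 := by
  obtain ⟨hl0, hl1⟩ := hlam
  set q : ℝ := (1 - lam) / lam with hq
  have hq0 : 0 < q := div_pos (by linarith) hl0
  have hqgam : q < gam := by
    have h' : 1 / lam - 1 = q := by rw [hq]; field_simp
    linarith [h' ▸ hgam]
  set e : ℝ := q - gam with he
  have he0 : e < 0 := by simp [he]; linarith
  have h2B : (0:ℝ) < 2 * B := by linarith
  set M : ℝ := B * (2 * B) ^ q / c2 with hM
  have hM0 : 0 < M := div_pos (mul_pos hB (Real.rpow_pos_of_pos h2B q)) hc2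
  refine ⟨M ^ (1 / e), Real.rpow_pos_of_pos hM0 _, ?_⟩
  intro δ hδ hδle h hh
  have hMe : M ≤ δ ^ e := by
    have h1 : (M ^ (1/e)) ^ e ≤ δ ^ e :=
      Real.rpow_le_rpow_of_nonpos hδ hδle he0.le
    calc M = (M ^ (1/e)) ^ e := by
            rw [← Real.rpow_mul hM0.le, one_div, inv_mul_cancel₀ (ne_of_lt he0), Real.rpow_one]
      _ ≤ δ ^ e := h1
  set h0 : ℝ := (δ / (2*B)) ^ (1/lam) with hh0def
  have hδ2B : 0 < δ / (2*B) := div_pos hδ h2B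
  have hh0 : 0 < h0 := Real.rpow_pos_of_pos hδ2B _
  have hh0lam : h0 ^ lam = δ / (2*B) := by
    rw [hh0def, ← Real.rpow_mul hδ2B.le, one_div, inv_mul_cancel₀ (ne_of_gt hl0), Real.rpow_one]
  have hpos : 0 ≤ (c2 / δ ^ gam) * h :=
    mul_nonneg (div_nonneg hc2.le (Real.rpow_pos_of_pos hδ gam).le) hh.le
  rcases le_or_gt h h0 with hcase | hcase
  · have hle : h ^ lam ≤ h0 ^ lam := Real.rpow_le_rpow hh.le hcase hl0.le
    have : B * h ^ lam ≤ δ / 2 := by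
      calc B * h ^ lam ≤ B * (δ / (2*B)) := by
            rw [← hh0lam]; exact mul_le_mul_of_nonneg_left hle hB.le
        _ = δ / 2 := by field_simp
    linarith
  · -- h0 < h
    have hkey : B ≤ (c2 / δ ^ gam) * h ^ (1 - lam) := by
      have h1 : h0 ^ (1 - lam) ≤ h ^ (1 - lam) :=
        Real.rpow_le_rpow hh0.le hcase.le (by linarith)
      have h2 : h0 ^ (1 - lam) = (δ / (2*B)) ^ q := by
        rw [hh0def, ← Real.rpow_mul hδ2B.le]
        congr 1
        rw [hq]; field_simp
      have h3 : (δ / (2*B)) ^ q = δ ^ q / (2*B) ^ q := Real.div_rpow hδ.le h2B.le q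
      have h4 : (c2 / δ ^ gam) * (δ ^ q / (2*B) ^ q) = c2 * δ ^ e / (2*B) ^ q := by
        rw [he, Real.rpow_sub hδ]
        field_simp
      have h5 : B ≤ c2 * δ ^ e / (2*B) ^ q := by
        have h2Bq : 0 < (2*B) ^ q := Real.rpow_pos_of_pos h2B q
        rw [le_div_iff₀ h2Bq]
        have hM' : B * (2*B) ^ q ≤ δ ^ e * c2 := by
          have := (div_le_iff₀ hc2).mp (hM ▸ hMe)
          linarith
        linarith
      calc B ≤ c2 * δ ^ e / (2*B) ^ q := h5
        _ = (c2 / δ ^ gam) * ((δ / (2*B)) ^ q) := by rw [h3, h4]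
        _ = (c2 / δ ^ gam) * h0 ^ (1 - lam) := by rw [h2]
        _ ≤ (c2 / δ ^ gam) * h ^ (1 - lam) := by
            exact mul_le_mul_of_nonneg_left h1
              (div_nonneg hc2.le (Real.rpow_pos_of_pos hδ gam).le)
    have hfin : B * h ^ lam ≤ (c2 / δ ^ gam) * h := by
      have hhl : 0 ≤ h ^ lam := (Real.rpow_pos_of_pos hh lam).le
      calc B * h ^ lam ≤ ((c2 / δ ^ gam) * h ^ (1 - lam)) * h ^ lam :=
            mul_le_mul_of_nonneg_right hkey hhl
        _ = (c2 / δ ^ gam) * (h ^ (1 - lam) * h ^ lam) := by ring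
        _ = (c2 / δ ^ gam) * h := by
            rw [← Real.rpow_add hh, sub_add_cancel, Real.rpow_one]
    linarith

private lemma barrier_lemma {T lam δ A B : ℝ} (hT : 0 < T) (hlam : lam ∈ Set.Ioo (0:ℝ) 1)
    (hδ : 0 < δ) {u : ℝ → ℝ} (hu : ContinuousOn u (Icc (0:ℝ) T)) (hu0 : δ ≤ u 0)
    (hinc : ∀ s ∈ Icc (0:ℝ) T, ∀ t ∈ Icc (0:ℝ) T, s < t → (∀ r ∈ Icc s t, u r ≤ δ) →
      A * (t - s) - B * (t - s) ^ lam ≤ u t - u s)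
    (hAB : ∀ h : ℝ, 0 < h → B * h ^ lam ≤ A * h + δ / 2) :
    ∀ t ∈ Icc (0:ℝ) T, δ / 2 ≤ u t := by
  intro t1 ht1
  by_contra hlt
  push_neg at hlt
  set S : Set ℝ := Icc 0 t1 ∩ u ⁻¹' (Ici δ) with hS
  have hsub : Icc 0 t1 ⊆ Icc 0 T := Icc_subset_Icc le_rfl ht1.2
  have hSclosed : IsClosed S :=
    (hu.mono hsub).preimage_isClosed_of_isClosed isClosed_Icc isClosed_Ici
  have hS0 : (0:ℝ) ∈ S := ⟨⟨le_rfl, ht1.1⟩, hu0⟩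
  have hSne : S.Nonempty := ⟨0, hS0⟩
  have hSbdd : BddAbove S := ⟨t1, fun x hx => hx.1.2⟩
  set s' : ℝ := sSup S with hs'
  have hs'mem : s' ∈ S := hSclosed.csSup_mem hSne hSbdd
  have hs'T : s' ∈ Icc (0:ℝ) T := hsub hs'mem.1
  have hus' : δ ≤ u s' := hs'mem.2
  have hs'lt : s' < t1 := by
    rcases lt_or_eq_of_le hs'mem.1.2 with h | h
    · exact h
    · exfalso; rw [h] at hus'; linarith
  have hrlt : ∀ r : ℝ, s' < r → r ≤ t1 → u r < δ := by
    intro r hr1 hr2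
    by_contra hge
    push_neg at hge
    have : r ∈ S := ⟨⟨le_trans hs'mem.1.1 hr1.le, hr2⟩, hge⟩
    exact absurd (le_csSup hSbdd this) (not_le.mpr hr1)
  have hus'le : u s' ≤ δ := by
    have hne : (nhdsWithin s' (Ioc s' t1)).NeBot := by
      rw [← mem_closure_iff_nhdsWithin_neBot, closure_Ioc (ne_of_lt hs'lt)]
      exact ⟨le_rfl, hs'lt.le⟩
    have hsub2 : Ioc s' t1 ⊆ Icc (0:ℝ) T := fun r hr =>
      ⟨le_trans hs'mem.1.1 hr.1.le, le_trans hr.2 ht1.2⟩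
    have htendu : Filter.Tendsto u (nhdsWithin s' (Ioc s' t1)) (nhds (u s')) :=
      (hu s' hs'T).mono hsub2
    exact le_of_tendsto htendu
      (Filter.eventually_of_mem self_mem_nhdsWithin (fun r hr => (hrlt r hr.1 hr.2).le))
  have hall : ∀ r ∈ Icc s' t1, u r ≤ δ := by
    intro r hr
    rcases eq_or_lt_of_le hr.1 with h | h
    · rw [← h]; exact hus'le
    · exact (hrlt r h hr.2).le
  have hstep := hinc s' hs'T t1 ht1 hs'lt hall
  have hABs := hAB (t1 - s') (by linarith)
  linarith

private lemma wrapper_bound {T lam : ℝ} (hT : 0 < T) (hlam : lam ∈ Set.Ioo (0:ℝ) 1)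
    {phi psi Z : ℝ → ℝ} {K Lam : ℝ}
    (hphiH : ∀ s ∈ Icc (0:ℝ) T, ∀ t ∈ Icc (0:ℝ) T, |phi t - phi s| ≤ K * |t - s| ^ lam)
    (hpsiH : ∀ s ∈ Icc (0:ℝ) T, ∀ t ∈ Icc (0:ℝ) T, |psi t - psi s| ≤ K * |t - s| ^ lam)
    (hZH : ∀ s ∈ Icc (0:ℝ) T, ∀ t ∈ Icc (0:ℝ) T, |Z t - Z s| ≤ Lam * |t - s| ^ lam)
    (hphiC : ContinuousOn phi (Icc (0:ℝ) T)) (hpsiC : ContinuousOn psi (Icc (0:ℝ) T))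
    {δ A : ℝ} (hδ : 0 < δ)
    (hAB : ∀ h : ℝ, 0 < h → (K + Lam) * h ^ lam ≤ A * h + δ / 2)
    {W g : ℝ → ℝ} (hW : ContinuousOn W (Icc (0:ℝ) T))
    (hgint : ∀ t ∈ Icc (0:ℝ) T, IntervalIntegrable g volume 0 t)
    (heq : ∀ t ∈ Icc (0:ℝ) T, W t = W 0 + (∫ s in (0:ℝ)..t, g s) + Z t)
    (hglow : ∀ r ∈ Icc (0:ℝ) T, W r - phi r ≤ δ → A ≤ g r)
    (hgup : ∀ r ∈ Icc (0:ℝ) T, psi r - W r ≤ δ → g r ≤ -A)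
    (h0l : δ ≤ W 0 - phi 0) (h0u : δ ≤ psi 0 - W 0) :
    ∀ t ∈ Icc (0:ℝ) T, δ/2 ≤ W t - phi t ∧ δ/2 ≤ psi t - W t := by
  -- increments of W
  have hWinc : ∀ s ∈ Icc (0:ℝ) T, ∀ t ∈ Icc (0:ℝ) T, s ≤ t →
      W t - W s = (∫ r in s..t, g r) + (Z t - Z s) := by
    intro s hs t ht hst
    have h1 := heq s hs
    have h2 := heq t ht
    have h3 : (∫ r in (0:ℝ)..t, g r) - (∫ r in (0:ℝ)..s, g r) = ∫ r in s..t, g r :=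
      intervalIntegral.integral_interval_sub_left (hgint t ht) (hgint s hs)
    rw [h1, h2]
    linarith [h3]
  have hgint' : ∀ s ∈ Icc (0:ℝ) T, ∀ t ∈ Icc (0:ℝ) T, s ≤ t →
      IntervalIntegrable g volume s t := by
    intro s hs t ht hst
    apply (hgint t ht).mono_set
    rw [Set.uIcc_of_le hst, Set.uIcc_of_le ht.1]
    exact Icc_subset_Icc hs.1 le_rfl
  have hintlow : ∀ s ∈ Icc (0:ℝ) T, ∀ t ∈ Icc (0:ℝ) T, s ≤ t →
      (∀ r ∈ Icc s t, A ≤ g r) → A * (t - s) ≤ ∫ r in s..t, g r := by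
    intro s hs t ht hst hr
    have := intervalIntegral.integral_mono_on hst (intervalIntegrable_const (c := A))
      (hgint' s hs t ht hst) hr
    rwa [intervalIntegral.integral_const, smul_eq_mul, mul_comm] at this
  have hinthigh : ∀ s ∈ Icc (0:ℝ) T, ∀ t ∈ Icc (0:ℝ) T, s ≤ t →
      (∀ r ∈ Icc s t, g r ≤ -A) → (∫ r in s..t, g r) ≤ -A * (t - s) := by
    intro s hs t ht hst hr
    have := intervalIntegral.integral_mono_on hst (hgint' s hs t ht hst)
      (intervalIntegrable_const (c := -A)) hr
    rwa [intervalIntegral.integral_const, smul_eq_mul, mul_comm] at this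
  intro t ht
  constructor
  · -- lower barrier
    apply barrier_lemma hT hlam hδ (u := fun r => W r - phi r)
      (hW.sub hphiC) h0l _ hAB t ht
    intro s hs t' ht' hst hall
    have hsub : Icc s t' ⊆ Icc (0:ℝ) T := Icc_subset_Icc hs.1 ht'.2
    have hglow' : ∀ r ∈ Icc s t', A ≤ g r := fun r hr =>
      hglow r (hsub hr) (hall r hr)
    have hZb : |Z t' - Z s| ≤ Lam * (t' - s) ^ lam := by
      have := hZH s hs t' ht'
      rwa [abs_of_nonneg (by linarith : (0:ℝ) ≤ t' - s)] at this
    have hphib : |phi t' - phi s| ≤ K * (t' - s) ^ lam := by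
      have := hphiH s hs t' ht'
      rwa [abs_of_nonneg (by linarith : (0:ℝ) ≤ t' - s)] at this
    have h1 := hWinc s hs t' ht' hst.le
    have h2 := hintlow s hs t' ht' hst.le hglow'
    have h3 := abs_le.mp hZb
    have h4 := abs_le.mp hphib
    nlinarith [h3.1, h4.2]
  · -- upper barrier
    apply barrier_lemma hT hlam hδ (u := fun r => psi r - W r)
      (hpsiC.sub hW) h0u _ hAB t ht
    intro s hs t' ht' hst hall
    have hsub : Icc s t' ⊆ Icc (0:ℝ) T := Icc_subset_Icc hs.1 ht'.2
    have hgup' : ∀ r ∈ Icc s t', g r ≤ -A := fun r hr =>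
      hgup r (hsub hr) (hall r hr)
    have hZb : |Z t' - Z s| ≤ Lam * (t' - s) ^ lam := by
      have := hZH s hs t' ht'
      rwa [abs_of_nonneg (by linarith : (0:ℝ) ≤ t' - s)] at this
    have hpsib : |psi t' - psi s| ≤ K * (t' - s) ^ lam := by
      have := hpsiH s hs t' ht'
      rwa [abs_of_nonneg (by linarith : (0:ℝ) ≤ t' - s)] at this
    have h1 := hWinc s hs t' ht' hst.le
    have h2 := hinthigh s hs t' ht' hst.le hgup'
    have h3 := abs_le.mp hZb
    have h4 := abs_le.mp hpsib
    nlinarith [h3.2, h4.1]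

theorem stmt_0
    (T lam : ℝ) (hT : 0 < T) (hlam : lam ∈ Set.Ioo (0:ℝ) 1)
    (phi psi : ℝ → ℝ) (K : ℝ) (hK : 0 < K)
    (hphiH : ∀ s ∈ Set.Icc (0:ℝ) T, ∀ t ∈ Set.Icc (0:ℝ) T, |phi t - phi s| ≤ K * |t - s| ^ lam)
    (hpsiH : ∀ s ∈ Set.Icc (0:ℝ) T, ∀ t ∈ Set.Icc (0:ℝ) T, |psi t - psi s| ≤ K * |t - s| ^ lam)
    (hphipsi : ∀ t ∈ Set.Icc (0:ℝ) T, phi t < psi t)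
    (b : ℝ → ℝ → ℝ) (c1 p c2 ystar gam : ℝ)
    (hc1 : 0 < c1) (hp : 1 < p) (hc2 : 0 < c2) (hystar : 0 < ystar)
    (hgam : 1 / lam - 1 < gam)
    (hB2cont : ContinuousOn (fun q : ℝ × ℝ => b q.1 q.2)
      {q : ℝ × ℝ | q.1 ∈ Set.Icc (0:ℝ) T ∧ phi q.1 < q.2 ∧ q.2 < psi q.1})
    (hB2lip : ∀ ε : ℝ, 0 < ε → ε < min 1 ((⨆ t : Set.Icc (0:ℝ) T, |psi t.1 - phi t.1|) / 2) →
      ∀ t1 ∈ Set.Icc (0:ℝ) T, ∀ t2 ∈ Set.Icc (0:ℝ) T, ∀ y1 y2 : ℝ,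
        phi t1 + ε < y1 → y1 < psi t1 - ε → phi t2 + ε < y2 → y2 < psi t2 - ε →
        |b t1 y1 - b t2 y2| ≤ c1 / ε ^ p * (|y1 - y2| + |t1 - t2| ^ lam))
    (hB3low : ∀ t ∈ Set.Icc (0:ℝ) T, ∀ y : ℝ, phi t < y → y ≤ phi t + ystar → y < psi t →
      c2 / (y - phi t) ^ gam ≤ b t y)
    (hB3up : ∀ t ∈ Set.Icc (0:ℝ) T, ∀ y : ℝ, psi t - ystar ≤ y → y < psi t → phi t < y →
      b t y ≤ -(c2 / (psi t - y) ^ gam))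
    (Y0 : ℝ) (hB1 : phi 0 < Y0 ∧ Y0 < psi 0)
    (Z : ℝ → ℝ) (Lam : ℝ) (hLam : 0 < Lam) (hZ0 : Z 0 = 0)
    (hZH : ∀ s ∈ Set.Icc (0:ℝ) T, ∀ t ∈ Set.Icc (0:ℝ) T, |Z t - Z s| ≤ Lam * |t - s| ^ lam)
    :
    ∃ Y : ℝ → ℝ,
      (ContinuousOn Y (Set.Icc (0:ℝ) T) ∧
        (∀ t ∈ Set.Icc (0:ℝ) T, phi t < Y t ∧ Y t < psi t) ∧
        (∀ t ∈ Set.Icc (0:ℝ) T, Y t = Y0 + (∫ s in (0:ℝ)..t, b s (Y s)) + Z t)) ∧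
      ∀ Y2 : ℝ → ℝ,
        (ContinuousOn Y2 (Set.Icc (0:ℝ) T) ∧
          (∀ t ∈ Set.Icc (0:ℝ) T, phi t < Y2 t ∧ Y2 t < psi t) ∧
          (∀ t ∈ Set.Icc (0:ℝ) T, Y2 t = Y0 + (∫ s in (0:ℝ)..t, b s (Y2 s)) + Z t)) →
        ∀ t ∈ Set.Icc (0:ℝ) T, Y2 t = Y t := by
  obtain ⟨hl0, hl1⟩ := hlam
  have h0T : (0:ℝ) ∈ Icc (0:ℝ) T := ⟨le_rfl, hT.le⟩
  have hphiC : ContinuousOn phi (Icc (0:ℝ) T) := holder_continuousOn hl0 hphiH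
  have hpsiC : ContinuousOn psi (Icc (0:ℝ) T) := holder_continuousOn hl0 hpsiH
  have hZC : ContinuousOn Z (Icc (0:ℝ) T) := holder_continuousOn hl0 hZH
  have hgam0 : 0 < gam := by
    have : (1:ℝ) < 1 / lam := by
      rw [lt_div_iff₀ hl0]; linarith
    linarith
  -- minimal width
  obtain ⟨tw, htw, hminw⟩ := isCompact_Icc.exists_isMinOn (Set.nonempty_Icc.mpr hT.le)
    (hpsiC.sub hphiC)
  set w : ℝ := psi tw - phi tw with hwdef
  have hw0 : 0 < w := sub_pos.mpr (hphipsi tw htw)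
  have hw : ∀ t ∈ Icc (0:ℝ) T, w ≤ psi t - phi t := fun t ht => hminw ht
  -- the sup in hB2lip is positive
  set Ssup : ℝ := ⨆ t : Icc (0:ℝ) T, |psi t.1 - phi t.1| with hSsup
  have hSpos : 0 < min 1 (Ssup / 2) := by
    have hbdd : BddAbove (Set.range fun t : Icc (0:ℝ) T => |psi t.1 - phi t.1|) := by
      refine ⟨|psi 0 - phi 0| + 2 * (K * T ^ lam), ?_⟩
      rintro x ⟨t, rfl⟩
      have h1 : |psi t.1 - psi 0| ≤ K * T ^ lam := by
        have := hpsiH 0 h0T t.1 t.2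
        have habs : |t.1 - 0| ^ lam ≤ T ^ lam := by
          apply Real.rpow_le_rpow (abs_nonneg _) _ hl0.le
          rw [sub_zero, abs_of_nonneg t.2.1]
          exact t.2.2
        nlinarith [this, habs, hK.le]
      have h2 : |phi t.1 - phi 0| ≤ K * T ^ lam := by
        have := hphiH 0 h0T t.1 t.2
        have habs : |t.1 - 0| ^ lam ≤ T ^ lam := by
          apply Real.rpow_le_rpow (abs_nonneg _) _ hl0.le
          rw [sub_zero, abs_of_nonneg t.2.1]
          exact t.2.2
        nlinarith [this, habs, hK.le]
      have : |psi t.1 - phi t.1| ≤ |psi t.1 - psi 0| + |psi 0 - phi 0| + |phi 0 - phi t.1| := by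
        have := abs_sub_le (psi t.1) (psi 0) (phi t.1)
        have h3 := abs_sub_le (psi 0) (phi 0) (phi t.1)
        linarith
      rw [abs_sub_comm (phi 0)] at this
      linarith
    have h01 : |psi 0 - phi 0| ≤ Ssup := le_ciSup hbdd ⟨0, h0T⟩
    have : 0 < |psi 0 - phi 0| := abs_pos.mpr (ne_of_gt (sub_pos.mpr (hphipsi 0 h0T)))
    simp only [lt_min_iff]
    constructor
    · norm_num
    · linarith
  -- choice of δ
  obtain ⟨δ0, hδ00, hδ0⟩ := exists_delta0 (lam := lam) (gam := gam) (c2 := c2)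
    (B := K + Lam) ⟨hl0, hl1⟩ hgam (by linarith) (by linarith)
  set δ : ℝ := min (min δ0 ystar) (min (min (Y0 - phi 0) (psi 0 - Y0)) (w / 2)) with hδdef
  have hδpos : 0 < δ := by
    simp only [hδdef, lt_min_iff]
    refine ⟨⟨hδ00, hystar⟩, ⟨⟨?_, ?_⟩, by linarith⟩⟩ <;> linarith [hB1.1, hB1.2]
  have hδ_δ0 : δ ≤ δ0 := le_trans (min_le_left _ _) (min_le_left _ _)
  have hδ_ystar : δ ≤ ystar := le_trans (min_le_left _ _) (min_le_right _ _)
  have hδ_Y0l : δ ≤ Y0 - phi 0 := le_trans (min_le_right _ _)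
    (le_trans (min_le_left _ _) (min_le_left _ _))
  have hδ_Y0u : δ ≤ psi 0 - Y0 := le_trans (min_le_right _ _)
    (le_trans (min_le_left _ _) (min_le_right _ _))
  have hδ_w : δ ≤ w / 2 := le_trans (min_le_right _ _) (min_le_right _ _)
  set A : ℝ := c2 / δ ^ gam with hAdef
  have hApos : 0 < A := div_pos hc2 (Real.rpow_pos_of_pos hδpos gam)
  have hAB : ∀ h : ℝ, 0 < h → (K + Lam) * h ^ lam ≤ A * h + δ / 2 :=
    fun h hh => hδ0 δ hδpos hδ_δ0 h hh
  set ε : ℝ := δ / 2 with hεdef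
  have hεpos : 0 < ε := by simp only [hεdef]; linarith
  set ε' : ℝ := min (δ / 4) (min 1 (Ssup / 2) / 2) with hε'def
  have hε'pos : 0 < ε' := by
    simp only [hε'def, lt_min_iff]
    constructor <;> linarith
  have hε'lt : ε' < min 1 (Ssup / 2) := by
    calc ε' ≤ min 1 (Ssup / 2) / 2 := min_le_right _ _
      _ < min 1 (Ssup / 2) := by linarith
  have hε'ε : ε' < ε := by
    calc ε' ≤ δ / 4 := min_le_left _ _
      _ < δ / 2 := by linarith
  -- drift bounds
  have hblow : ∀ r ∈ Icc (0:ℝ) T, ∀ y : ℝ, phi r < y → y - phi r ≤ δ → y < psi r →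
      A ≤ b r y := by
    intro r hr y h1 h2 h3
    have h4 : c2 / (y - phi r) ^ gam ≤ b r y :=
      hB3low r hr y h1 (by linarith) h3
    have h5 : (y - phi r) ^ gam ≤ δ ^ gam :=
      Real.rpow_le_rpow (by linarith) h2 hgam0.le
    have h6 : 0 < (y - phi r) ^ gam := Real.rpow_pos_of_pos (by linarith) gam
    calc A = c2 / δ ^ gam := rfl
      _ ≤ c2 / (y - phi r) ^ gam := div_le_div_of_nonneg_left hc2.le h6 h5
      _ ≤ b r y := h4
  have hbup : ∀ r ∈ Icc (0:ℝ) T, ∀ y : ℝ, y < psi r → psi r - y ≤ δ → phi r < y →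
      b r y ≤ -A := by
    intro r hr y h1 h2 h3
    have h4 : b r y ≤ -(c2 / (psi r - y) ^ gam) :=
      hB3up r hr y (by linarith) h1 h3
    have h5 : (psi r - y) ^ gam ≤ δ ^ gam :=
      Real.rpow_le_rpow (by linarith) h2 hgam0.le
    have h6 : 0 < (psi r - y) ^ gam := Real.rpow_pos_of_pos (by linarith) gam
    have h7 : A ≤ c2 / (psi r - y) ^ gam := div_le_div_of_nonneg_left hc2.le h6 h5
    linarith
  -- the clamp
  set cl : ℝ → ℝ → ℝ := fun t x => min (max x (phi t + ε)) (psi t - ε) with hcl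
  have hclband : ∀ t ∈ Icc (0:ℝ) T, ∀ x : ℝ,
      phi t + ε ≤ cl t x ∧ cl t x ≤ psi t - ε := by
    intro t ht x
    have hwt : w ≤ psi t - phi t := hw t ht
    have hband : phi t + ε ≤ psi t - ε := by
      simp only [hεdef]; linarith
    constructor
    · simp only [hcl, le_min_iff]
      exact ⟨le_trans (le_max_right _ _) (le_refl _), hband⟩
    · exact min_le_right _ _
  have hclid : ∀ t ∈ Icc (0:ℝ) T, ∀ x : ℝ, phi t + ε ≤ x → x ≤ psi t - ε →
      cl t x = x := by
    intro t ht x h1 h2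
    simp only [hcl]
    rw [max_eq_left h1, min_eq_left h2]
  have hcllow : ∀ t ∈ Icc (0:ℝ) T, ∀ x : ℝ, x - phi t ≤ δ → cl t x - phi t ≤ δ := by
    intro t ht x h1
    have hwt : w ≤ psi t - phi t := hw t ht
    have hmax : max x (phi t + ε) ≤ phi t + δ := by
      apply max_le (by linarith)
      simp only [hεdef]; linarith
    have : cl t x ≤ max x (phi t + ε) := min_le_left _ _
    linarith
  have hclup : ∀ t ∈ Icc (0:ℝ) T, ∀ x : ℝ, psi t - x ≤ δ → psi t - cl t x ≤ δ := by
    intro t ht x h1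
    have hwt : w ≤ psi t - phi t := hw t ht
    rcases le_or_gt x (psi t - ε) with h | h
    · have h2 : cl t x = max x (phi t + ε) := by
        simp only [hcl]
        apply min_eq_left
        apply max_le h
        simp only [hεdef]; linarith
      have : x ≤ max x (phi t + ε) := le_max_left _ _
      rw [h2]; linarith
    · have h2 : cl t x ≥ psi t - ε := by
        have := (hclband t ht x).2
        have h3 : psi t - ε ≤ max x (phi t + ε) := le_trans h.le (le_max_left _ _)
        simp only [hcl]
        exact le_min h3 le_rfl
      simp only [hεdef] at h2 ⊢
      linarith
  have hclopen : ∀ t ∈ Icc (0:ℝ) T, ∀ x : ℝ, phi t < cl t x ∧ cl t x < psi t := by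
    intro t ht x
    obtain ⟨h1, h2⟩ := hclband t ht x
    constructor <;> [linarith; linarith]
  -- domain of continuity of b
  set Om : Set (ℝ × ℝ) := {q : ℝ × ℝ | q.1 ∈ Icc (0:ℝ) T ∧ phi q.1 < q.2 ∧ q.2 < psi q.1}
    with hOm
  -- compact band
  set F : ℝ × ℝ → ℝ × ℝ :=
    fun q => (q.1, (1 - q.2) * (phi q.1 + ε) + q.2 * (psi q.1 - ε)) with hF
  set Gam : Set (ℝ × ℝ) := F '' ((Icc (0:ℝ) T) ×ˢ (Icc (0:ℝ) 1)) with hGam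
  have hFc : ContinuousOn F ((Icc (0:ℝ) T) ×ˢ (Icc (0:ℝ) 1)) := by
    apply ContinuousOn.prodMk
    · exact continuous_fst.continuousOn
    · have hphi' : ContinuousOn (fun q : ℝ × ℝ => phi q.1) ((Icc (0:ℝ) T) ×ˢ (Icc (0:ℝ) 1)) :=
        hphiC.comp continuous_fst.continuousOn (fun q hq => hq.1)
      have hpsi' : ContinuousOn (fun q : ℝ × ℝ => psi q.1) ((Icc (0:ℝ) T) ×ˢ (Icc (0:ℝ) 1)) :=
        hpsiC.comp continuous_fst.continuousOn (fun q hq => hq.1)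
      exact ((continuousOn_const.sub continuous_snd.continuousOn).mul
        (hphi'.add continuousOn_const)).add
        (continuous_snd.continuousOn.mul (hpsi'.sub continuousOn_const))
  have hGamcomp : IsCompact Gam :=
    (isCompact_Icc.prod isCompact_Icc).image_of_continuousOn hFc
  have hGamsub : Gam ⊆ Om := by
    rintro q ⟨⟨t, θ⟩, ⟨ht, hθ⟩, rfl⟩
    have hwt : w ≤ psi t - phi t := hw t ht
    have hband : phi t + ε ≤ psi t - ε := by
      simp only [hεdef]; linarith
    simp only [hOm, Set.mem_setOf_eq, hF]
    refine ⟨ht, ?_, ?_⟩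
    · have e1 : (1 - θ) * (phi t + ε) + θ * (psi t - ε) - (phi t + ε)
          = θ * ((psi t - ε) - (phi t + ε)) := by ring
      have e2 : 0 ≤ θ * ((psi t - ε) - (phi t + ε)) :=
        mul_nonneg hθ.1 (by linarith)
      linarith [hεpos]
    · have e1 : (psi t - ε) - ((1 - θ) * (phi t + ε) + θ * (psi t - ε))
          = (1 - θ) * ((psi t - ε) - (phi t + ε)) := by ring
      have e2 : 0 ≤ (1 - θ) * ((psi t - ε) - (phi t + ε)) :=
        mul_nonneg (by linarith [hθ.2]) (by linarith)
      linarith [hεpos]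
  have hclmem : ∀ t ∈ Icc (0:ℝ) T, ∀ x : ℝ, (t, cl t x) ∈ Gam := by
    intro t ht x
    have hwt : w ≤ psi t - phi t := hw t ht
    have hd : 0 < (psi t - ε) - (phi t + ε) := by
      simp only [hεdef]; linarith
    obtain ⟨hb1, hb2⟩ := hclband t ht x
    set θ : ℝ := (cl t x - (phi t + ε)) / ((psi t - ε) - (phi t + ε)) with hθdef
    refine ⟨(t, θ), ⟨ht, ?_, ?_⟩, ?_⟩
    · simp only [hθdef]
      exact div_nonneg (by linarith) hd.le
    · simp only [hθdef]
      rw [div_le_one hd]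
      linarith
    · simp only [hF, hθdef, Prod.mk.injEq]
      refine ⟨trivial, ?_⟩
      field_simp
      ring
  -- bound on b over the band
  obtain ⟨C0, hC0⟩ := hGamcomp.exists_bound_of_continuousOn (hB2cont.mono hGamsub)
  set C' : ℝ := max C0 0 with hC'
  have hC'0 : 0 ≤ C' := le_max_right _ _
  -- the truncated drift
  set g : ℝ → ℝ → ℝ := fun t x => b t (cl t (x + Z t)) with hgdef
  have hgbound : ∀ t ∈ Icc (0:ℝ) T, ∀ x : ℝ, |g t x| ≤ C' := by
    intro t ht x
    have := hC0 (t, cl t (x + Z t)) (hclmem t ht (x + Z t))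
    simp only [Real.norm_eq_abs] at this
    exact le_trans this (le_max_left _ _)
  set Lc : ℝ := c1 / ε' ^ p with hLc
  have hLc0 : 0 ≤ Lc := div_nonneg hc1.le (Real.rpow_pos_of_pos hε'pos p).le
  have hglip : ∀ t ∈ Icc (0:ℝ) T, ∀ x1 x2 : ℝ, |g t x1 - g t x2| ≤ Lc * |x1 - x2| := by
    intro t ht x1 x2
    set y1 : ℝ := cl t (x1 + Z t) with hy1
    set y2 : ℝ := cl t (x2 + Z t) with hy2
    have hy1b := hclband t ht (x1 + Z t)
    have hy2b := hclband t ht (x2 + Z t)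
    have hkey := hB2lip ε' hε'pos hε'lt t ht t ht y1 y2
      (by linarith [hy1b.1]) (by linarith [hy1b.2]) (by linarith [hy2b.1]) (by linarith [hy2b.2])
    rw [sub_self, abs_zero, Real.zero_rpow (ne_of_gt hl0), add_zero] at hkey
    have hy12 : |y1 - y2| ≤ |x1 - x2| := by
      have h1 : |y1 - y2| ≤ max |max (x1 + Z t) (phi t + ε) - max (x2 + Z t) (phi t + ε)| |psi t - ε - (psi t - ε)| :=
        abs_min_sub_min_le_max _ _ _ _
      have h2 : |max (x1 + Z t) (phi t + ε) - max (x2 + Z t) (phi t + ε)| ≤ |(x1 + Z t) - (x2 + Z t)| :=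
        abs_max_sub_max_le_abs _ _ _
      have h3 : (x1 + Z t) - (x2 + Z t) = x1 - x2 := by ring
      rw [sub_self, abs_zero] at h1
      rw [h3] at h2
      calc |y1 - y2| ≤ max |max (x1 + Z t) (phi t + ε) - max (x2 + Z t) (phi t + ε)| 0 := h1
        _ = |max (x1 + Z t) (phi t + ε) - max (x2 + Z t) (phi t + ε)| := max_eq_left (abs_nonneg _)
        _ ≤ |x1 - x2| := h2
    calc |g t x1 - g t x2| ≤ Lc * |y1 - y2| := hkey
      _ ≤ Lc * |x1 - x2| := mul_le_mul_of_nonneg_left hy12 hLc0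
  -- Picard–Lindelöf
  set R : ℝ := C' * T + 1 with hRdef
  have hRpos : 0 ≤ R := by
    have : 0 ≤ C' * T := mul_nonneg hC'0 hT.le
    simp only [hRdef]; linarith
  have hpl : IsPicardLindelof g (tmin := 0) (tmax := T) ⟨0, h0T⟩ Y0 (Real.toNNReal R) 0
      (Real.toNNReal C') (Real.toNNReal Lc) := by
    refine ⟨?_, ?_, ?_, ?_⟩
    · intro t ht
      apply LipschitzOnWith.of_dist_le_mul
      intro x _ y _
      rw [Real.dist_eq, Real.dist_eq, Real.coe_toNNReal _ hLc0]
      exact hglip t ht x y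
    · intro x _
      have hm : ContinuousOn (fun t : ℝ => (t, cl t (x + Z t))) (Icc (0:ℝ) T) := by
        apply ContinuousOn.prodMk continuousOn_id
        exact ((continuousOn_const.add hZC).sup (hphiC.add continuousOn_const)).inf
          (hpsiC.sub continuousOn_const)
      exact hB2cont.comp hm (fun t ht =>
        ⟨ht, (hclopen t ht (x + Z t)).1, (hclopen t ht (x + Z t)).2⟩)
    · intro t ht x _
      rw [Real.norm_eq_abs, Real.coe_toNNReal _ hC'0]
      exact hgbound t ht x
    · simp only [Real.coe_toNNReal _ hC'0, Real.coe_toNNReal _ hRpos, NNReal.coe_zero,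
        sub_zero, sub_self, max_eq_left hT.le]
      rw [hRdef]
      linarith
  obtain ⟨X, hX0', hXd⟩ := hpl.exists_eq_forall_mem_Icc_hasDerivWithinAt₀
  have hX0 : X 0 = Y0 := hX0'
  have hXC : ContinuousOn X (Icc (0:ℝ) T) := fun t ht => (hXd t ht).continuousWithinAt
  set Y : ℝ → ℝ := fun t => X t + Z t with hYdef
  have hYC : ContinuousOn Y (Icc (0:ℝ) T) := hXC.add hZC
  have hY00 : Y 0 = Y0 := by simp only [hYdef, hX0, hZ0, add_zero]
  set q1 : ℝ → ℝ := fun r => g r (X r) with hq1def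
  have hq1C : ContinuousOn q1 (Icc (0:ℝ) T) := by
    have hm : ContinuousOn (fun r : ℝ => (r, cl r (X r + Z r))) (Icc (0:ℝ) T) := by
      apply ContinuousOn.prodMk continuousOn_id
      exact (((hXC.add hZC).sup (hphiC.add continuousOn_const)).inf
        (hpsiC.sub continuousOn_const))
    exact hB2cont.comp hm (fun r hr =>
      ⟨hr, (hclopen r hr (X r + Z r)).1, (hclopen r hr (X r + Z r)).2⟩)
  have hq1int : ∀ t ∈ Icc (0:ℝ) T, IntervalIntegrable q1 volume 0 t := by
    intro t ht
    apply ContinuousOn.intervalIntegrable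
    apply hq1C.mono
    rw [uIcc_of_le ht.1]
    exact Icc_subset_Icc le_rfl ht.2
  have hFTC : ∀ t ∈ Icc (0:ℝ) T, (∫ r in (0:ℝ)..t, q1 r) = X t - X 0 := by
    intro t ht
    apply intervalIntegral.integral_eq_sub_of_hasDeriv_right_of_le ht.1
      (hXC.mono (Icc_subset_Icc le_rfl ht.2)) _ (hq1int t ht)
    intro x hx
    have hxI : x ∈ Icc (0:ℝ) T := ⟨hx.1.le, le_trans hx.2.le ht.2⟩
    have hnbhd : Icc (0:ℝ) T ∈ nhds x :=
      Icc_mem_nhds (by linarith [hx.1]) (by linarith [hx.2, ht.2])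
    exact (((hXd x hxI).hasDerivAt hnbhd).hasDerivWithinAt)
  have hYeq : ∀ t ∈ Icc (0:ℝ) T, Y t = Y 0 + (∫ r in (0:ℝ)..t, q1 r) + Z t := by
    intro t ht
    rw [hFTC t ht, hY00, hX0]
    simp only [hYdef]
    ring
  have hq1low : ∀ r ∈ Icc (0:ℝ) T, Y r - phi r ≤ δ → A ≤ q1 r := by
    intro r hr h1
    have hcll := hcllow r hr (Y r) h1
    have hop := hclopen r hr (Y r)
    have hqq : q1 r = b r (cl r (Y r)) := rfl
    rw [hqq]
    exact hblow r hr (cl r (Y r)) hop.1 hcll hop.2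
  have hq1up : ∀ r ∈ Icc (0:ℝ) T, psi r - Y r ≤ δ → q1 r ≤ -A := by
    intro r hr h1
    have hclu := hclup r hr (Y r) h1
    have hop := hclopen r hr (Y r)
    have hqq : q1 r = b r (cl r (Y r)) := rfl
    rw [hqq]
    exact hbup r hr (cl r (Y r)) hop.2 hclu hop.1
  have hbd : ∀ t ∈ Icc (0:ℝ) T, δ/2 ≤ Y t - phi t ∧ δ/2 ≤ psi t - Y t := by
    apply wrapper_bound hT ⟨hl0, hl1⟩ hphiH hpsiH hZH hphiC hpsiC hδpos hAB hYC
      hq1int hYeq hq1low hq1up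
    · rw [hY00]; exact hδ_Y0l
    · rw [hY00]; exact hδ_Y0u
  have hq1b : ∀ r ∈ Icc (0:ℝ) T, q1 r = b r (Y r) := by
    intro r hr
    obtain ⟨hl', hu'⟩ := hbd r hr
    have hid : cl r (Y r) = Y r := by
      apply hclid r hr (Y r)
      · simp only [hεdef]; linarith
      · simp only [hεdef]; linarith
    have hqq : q1 r = b r (cl r (Y r)) := rfl
    rw [hqq, hid]
  have hYsol : ∀ t ∈ Icc (0:ℝ) T, Y t = Y0 + (∫ s in (0:ℝ)..t, b s (Y s)) + Z t := by
    intro t ht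
    rw [hYeq t ht, hY00]
    have : (∫ r in (0:ℝ)..t, q1 r) = ∫ s in (0:ℝ)..t, b s (Y s) := by
      apply intervalIntegral.integral_congr
      intro r hr
      rw [uIcc_of_le ht.1] at hr
      exact hq1b r ⟨hr.1, le_trans hr.2 ht.2⟩
    rw [this]
  have hYin : ∀ t ∈ Icc (0:ℝ) T, phi t < Y t ∧ Y t < psi t := by
    intro t ht
    obtain ⟨hl', hu'⟩ := hbd t ht
    clear_value δ Y
    constructor <;> linarith
  -- bounds for an arbitrary solution
  have hsolbd : ∀ W : ℝ → ℝ, ContinuousOn W (Icc (0:ℝ) T) →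
      (∀ t ∈ Icc (0:ℝ) T, phi t < W t ∧ W t < psi t) →
      (∀ t ∈ Icc (0:ℝ) T, W t = Y0 + (∫ s in (0:ℝ)..t, b s (W s)) + Z t) →
      (∀ t ∈ Icc (0:ℝ) T, δ/2 ≤ W t - phi t ∧ δ/2 ≤ psi t - W t) ∧
        ContinuousOn (fun s => b s (W s)) (Icc (0:ℝ) T) ∧ W 0 = Y0 := by
    intro W hWC hWin hWeq
    have hqC : ContinuousOn (fun s => b s (W s)) (Icc (0:ℝ) T) := by
      have hm : ContinuousOn (fun r : ℝ => (r, W r)) (Icc (0:ℝ) T) :=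
        ContinuousOn.prodMk continuousOn_id hWC
      exact hB2cont.comp hm (fun r hr => ⟨hr, (hWin r hr).1, (hWin r hr).2⟩)
    have hqint : ∀ t ∈ Icc (0:ℝ) T, IntervalIntegrable (fun s => b s (W s)) volume 0 t := by
      intro t ht
      apply ContinuousOn.intervalIntegrable
      apply hqC.mono
      rw [uIcc_of_le ht.1]
      exact Icc_subset_Icc le_rfl ht.2
    have hW0 : W 0 = Y0 := by
      have := hWeq 0 h0T
      simpa [intervalIntegral.integral_same, hZ0] using this
    refine ⟨?_, hqC, hW0⟩
    apply wrapper_bound hT ⟨hl0, hl1⟩ hphiH hpsiH hZH hphiC hpsiC hδpos hAB hWC hqint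
    · intro t ht
      rw [hW0]
      exact hWeq t ht
    · intro r hr h1
      exact hblow r hr (W r) (hWin r hr).1 h1 (hWin r hr).2
    · intro r hr h1
      exact hbup r hr (W r) (hWin r hr).2 h1 (hWin r hr).1
    · rw [hW0]; exact hδ_Y0l
    · rw [hW0]; exact hδ_Y0u
  -- conclusion
  refine ⟨Y, ⟨hYC, hYin, hYsol⟩, ?_⟩
  rintro Y2 ⟨hY2C, hY2in, hY2eq⟩ t ht
  obtain ⟨hbd2, hq2C, hY20⟩ := hsolbd Y2 hY2C hY2in hY2eq
  obtain ⟨hbd1, hq1C', _⟩ := hsolbd Y hYC hYin hYsol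
  set qd : ℝ → ℝ := fun s => b s (Y2 s) - b s (Y s) with hqddef
  have hqdC : ContinuousOn qd (Icc (0:ℝ) T) := hq2C.sub hq1C'
  have hint2 : ∀ x ∈ Icc (0:ℝ) T, IntervalIntegrable (fun s => b s (Y2 s)) volume 0 x := by
    intro x hx
    apply ContinuousOn.intervalIntegrable
    apply hq2C.mono
    rw [uIcc_of_le hx.1]
    exact Icc_subset_Icc le_rfl hx.2
  have hint1 : ∀ x ∈ Icc (0:ℝ) T, IntervalIntegrable (fun s => b s (Y s)) volume 0 x := by
    intro x hx
    apply ContinuousOn.intervalIntegrable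
    apply hq1C'.mono
    rw [uIcc_of_le hx.1]
    exact Icc_subset_Icc le_rfl hx.2
  set G : ℝ → ℝ := fun u => ∫ s in (0:ℝ)..u, qd s with hGdef
  have hGeq : ∀ x ∈ Icc (0:ℝ) T, G x = Y2 x - Y x := by
    intro x hx
    have e2 := hY2eq x hx
    have e1 := hYsol x hx
    have hsub : G x = (∫ s in (0:ℝ)..x, b s (Y2 s)) - (∫ s in (0:ℝ)..x, b s (Y s)) := by
      simp only [hGdef, hqddef]
      rw [intervalIntegral.integral_sub (hint2 x hx) (hint1 x hx)]
    rw [hsub]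
    linarith
  have hGC : ContinuousOn G (Icc (0:ℝ) T) :=
    ContinuousOn.congr (hY2C.sub hYC) hGeq
  have hGd : ∀ x ∈ Ico (0:ℝ) T, HasDerivWithinAt G (qd x) (Ici x) x := by
    intro x hx
    have hsub2 : Icc x T ⊆ Icc (0:ℝ) T := Icc_subset_Icc hx.1 le_rfl
    have hmem : Icc x T ∈ nhdsWithin x (Ioi x) := by
      rw [mem_nhdsWithin_iff_exists_mem_nhds_inter]
      exact ⟨Iio T, Iio_mem_nhds hx.2, fun r hr => ⟨le_of_lt hr.2, le_of_lt hr.1⟩⟩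
    apply intervalIntegral.integral_hasDerivWithinAt_right
    · apply ContinuousOn.intervalIntegrable
      apply hqdC.mono
      rw [uIcc_of_le hx.1]
      exact Icc_subset_Icc le_rfl hx.2.le
    · exact ⟨Icc x T, hmem, ((hqdC.mono hsub2).aestronglyMeasurable measurableSet_Icc)⟩
    · exact ((hqdC x ⟨hx.1, hx.2.le⟩).mono hsub2).mono_of_mem_nhdsWithin hmem
  have hG0 : ‖G 0‖ ≤ 0 := by
    simp only [hGdef, intervalIntegral.integral_same, norm_zero, le_refl]
  have hGbound : ∀ x ∈ Ico (0:ℝ) T, ‖qd x‖ ≤ Lc * ‖G x‖ + 0 := by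
    intro x hx
    have hxI : x ∈ Icc (0:ℝ) T := ⟨hx.1, hx.2.le⟩
    obtain ⟨h2l, h2u⟩ := hbd2 x hxI
    obtain ⟨h1l, h1u⟩ := hbd1 x hxI
    have hkey := hB2lip ε' hε'pos hε'lt x hxI x hxI (Y2 x) (Y x)
      (by clear_value δ ε ε' Y; linarith [hεdef, hε'ε])
      (by clear_value δ ε ε' Y; linarith [hεdef, hε'ε])
      (by clear_value δ ε ε' Y; linarith [hεdef, hε'ε])
      (by clear_value δ ε ε' Y; linarith [hεdef, hε'ε])
    rw [sub_self, abs_zero, Real.zero_rpow (ne_of_gt hl0), add_zero] at hkey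
    rw [Real.norm_eq_abs, Real.norm_eq_abs, hGeq x hxI, add_zero]
    exact hkey
  have hgr := norm_le_gronwallBound_of_norm_deriv_right_le hGC hGd hG0 hGbound t ht
  have hgb0 : gronwallBound 0 Lc 0 (t - 0) = 0 := by
    unfold gronwallBound
    split_ifs <;> simp
  rw [hgb0] at hgr
  have : G t = 0 := by
    rw [Real.norm_eq_abs] at hgr
    exact abs_eq_zero.mp (le_antisymm hgr (abs_nonneg _))
  have := hGeq t ht
  linarith [this.symm.trans ‹G t = 0›]
end

section
/- Under Assumptions (B1)–(B3), there exist constants L1 > 0 and L2 > 0, depending only on Y(0), φ, ψ, the drift b (through c1, c2, p, y_*, γ), λ and T (in particular not on Z, Λ or N), such that for every noise path Z with Hölder constant Λ, the pathwise solution Y satisfies φ(t) + L1/(L2 + Λ)^{1/(γλ+λ−1)} ≤ Y(t) ≤ ψ(t) − L1/(L2 + Λ)^{1/(γλ+λ−1)} for all t ∈ [0,T]. -/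
open MeasureTheory Set Filter Topology

set_option maxHeartbeats 2000000

private lemma young_aux {lam A B x τ : ℝ} (h0 : 0 < lam) (h1 : lam < 1)
    (hA : 0 ≤ A) (hx : 0 ≤ x) (hτ : 0 ≤ τ) (_hB : 0 ≤ B)
    (hcond : B ≤ A ^ lam * x ^ (1 - lam)) : B * τ ^ lam ≤ A * τ + x := by
  have h2 : B * τ ^ lam ≤ (A ^ lam * x ^ (1 - lam)) * τ ^ lam :=
    mul_le_mul_of_nonneg_right hcond (Real.rpow_nonneg hτ lam)
  have h3 : (A ^ lam * x ^ (1 - lam)) * τ ^ lam = (A * τ) ^ lam * x ^ (1 - lam) := by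
    rw [Real.mul_rpow hA hτ]; ring
  have h4 : (A * τ) ^ lam * x ^ (1 - lam) ≤ lam * (A * τ) + (1 - lam) * x :=
    Real.geom_mean_le_arith_mean2_weighted (le_of_lt h0) (by linarith)
      (mul_nonneg hA hτ) hx (by ring)
  nlinarith [mul_nonneg hA hτ]

private lemma holder_cont_aux {T lam K : ℝ} {f : ℝ → ℝ} (hlam : 0 < lam)
    (hH : ∀ s ∈ Set.Icc (0:ℝ) T, ∀ t ∈ Set.Icc (0:ℝ) T, |f t - f s| ≤ K * |t - s| ^ lam) :
    ContinuousOn f (Set.Icc 0 T) := by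
  intro s hs
  have hg : Tendsto (fun t : ℝ => K * |t - s| ^ lam) (𝓝 s) (𝓝 0) := by
    have h1 : ContinuousAt (fun t : ℝ => |t - s|) s :=
      ((continuous_id.sub continuous_const).abs).continuousAt
    have h3 : ContinuousAt (fun t : ℝ => K * |t - s| ^ lam) s :=
      continuousAt_const.mul (h1.rpow_const (Or.inr hlam.le))
    simpa [Real.zero_rpow hlam.ne'] using h3.tendsto
  have key : Tendsto (fun t => dist (f t) (f s)) (𝓝[Set.Icc 0 T] s) (𝓝 0) := by
    have hb1 : ∀ᶠ t in 𝓝[Set.Icc 0 T] s, dist (f t) (f s) ≤ K * |t - s| ^ lam :=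
      Filter.eventually_of_mem self_mem_nhdsWithin
        (fun t ht => by rw [Real.dist_eq]; exact hH s hs t ht)
    exact squeeze_zero' (Filter.Eventually.of_forall fun t => dist_nonneg) hb1
      (hg.mono_left nhdsWithin_le_nhds)
  exact tendsto_iff_dist_tendsto_zero.mpr key

private lemma key_aux {T lam x A B : ℝ} {h : ℝ → ℝ} (hx : 0 < x)
    (hcont : ContinuousOn h (Set.Icc 0 T)) (h0 : 2 * x ≤ h 0)
    (hmin : ∀ τ : ℝ, 0 ≤ τ → B * τ ^ lam ≤ A * τ + x)
    (hstep : ∀ s t : ℝ, 0 ≤ s → s ≤ t → t ≤ T → (∀ u ∈ Set.Icc s t, h u ≤ 2 * x) →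
      A * (t - s) - B * (t - s) ^ lam ≤ h t - h s) :
    ∀ t ∈ Set.Icc 0 T, x ≤ h t := by
  intro t0 ht0
  by_contra hlt
  push_neg at hlt
  set S : Set ℝ := Set.Icc 0 t0 ∩ h ⁻¹' (Set.Ici (2 * x)) with hS
  have hsub : Set.Icc 0 t0 ⊆ Set.Icc 0 T := Set.Icc_subset_Icc le_rfl ht0.2
  have hSne : S.Nonempty := ⟨0, ⟨le_rfl, ht0.1⟩, h0⟩
  have hSclosed : IsClosed S :=
    (hcont.mono hsub).preimage_isClosed_of_isClosed isClosed_Icc isClosed_Ici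
  have hScomp : IsCompact S :=
    (isCompact_Icc (a := (0:ℝ)) (b := t0)).of_isClosed_subset hSclosed Set.inter_subset_left
  obtain ⟨hs0mem, hs0ge⟩ : sSup S ∈ S := hScomp.sSup_mem hSne
  set s0 := sSup S with hs0def
  have hs0ge' : 2 * x ≤ h s0 := hs0ge
  have hs0le : s0 ≤ t0 := hs0mem.2
  have hs0lt : s0 < t0 := by
    rcases lt_or_eq_of_le hs0le with hh | hh
    · exact hh
    · exfalso; rw [hh] at hs0ge'; linarith
  have hright : ∀ u, s0 < u → u ≤ t0 → h u < 2 * x := by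
    intro u hu1 hu2
    by_contra hc
    push_neg at hc
    have hmem : u ∈ S := ⟨⟨le_trans hs0mem.1 (le_of_lt hu1), hu2⟩, hc⟩
    have hbdd : BddAbove S := ⟨t0, fun v hv => hv.1.2⟩
    exact absurd (le_csSup hbdd hmem) (not_le.mpr hu1)
  have hs0le2 : h s0 ≤ 2 * x := by
    have hmem : s0 ∈ Set.Icc (0:ℝ) T := hsub ⟨hs0mem.1, hs0le⟩
    have hcw : ContinuousWithinAt h (Set.Ioc s0 t0) s0 :=
      (hcont.continuousWithinAt hmem).mono
        (fun u hu => hsub ⟨le_trans hs0mem.1 (le_of_lt hu.1), hu.2⟩)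
    have hne : (𝓝[Set.Ioc s0 t0] s0).NeBot := by
      have hmem' : Set.Ioc s0 t0 ∈ 𝓝[>] s0 := Ioc_mem_nhdsGT hs0lt
      have h1 : 𝓝[>] s0 ≤ 𝓝[Set.Ioc s0 t0] s0 := nhdsWithin_le_of_mem hmem'
      exact (nhdsGT_neBot s0).mono h1
    exact le_of_tendsto hcw (Filter.eventually_of_mem self_mem_nhdsWithin
      (fun u hu => le_of_lt (hright u hu.1 hu.2)))
  have hall : ∀ u ∈ Set.Icc s0 t0, h u ≤ 2 * x := by
    intro u hu
    rcases eq_or_lt_of_le hu.1 with rfl | hgt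
    · exact hs0le2
    · exact le_of_lt (hright u hgt hu.2)
  have hstep' := hstep s0 t0 hs0mem.1 hs0le ht0.2 hall
  have hmin' := hmin (t0 - s0) (by linarith)
  linarith

theorem stmt_1
    (T lam : ℝ) (hT : 0 < T) (hlam : lam ∈ Set.Ioo (0:ℝ) 1)
    (phi psi : ℝ → ℝ) (K : ℝ) (hK : 0 < K)
    (hphiH : ∀ s ∈ Set.Icc (0:ℝ) T, ∀ t ∈ Set.Icc (0:ℝ) T, |phi t - phi s| ≤ K * |t - s| ^ lam)
    (hpsiH : ∀ s ∈ Set.Icc (0:ℝ) T, ∀ t ∈ Set.Icc (0:ℝ) T, |psi t - psi s| ≤ K * |t - s| ^ lam)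
    (hphipsi : ∀ t ∈ Set.Icc (0:ℝ) T, phi t < psi t)
    (b : ℝ → ℝ → ℝ) (c1 p c2 ystar gam : ℝ)
    (hc1 : 0 < c1) (hp : 1 < p) (hc2 : 0 < c2) (hystar : 0 < ystar)
    (hgam : 1 / lam - 1 < gam)
    (hB2cont : ContinuousOn (fun q : ℝ × ℝ => b q.1 q.2)
      {q : ℝ × ℝ | q.1 ∈ Set.Icc (0:ℝ) T ∧ phi q.1 < q.2 ∧ q.2 < psi q.1})
    (hB2lip : ∀ ε : ℝ, 0 < ε → ε < min 1 ((⨆ t : Set.Icc (0:ℝ) T, |psi t.1 - phi t.1|) / 2) →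
      ∀ t1 ∈ Set.Icc (0:ℝ) T, ∀ t2 ∈ Set.Icc (0:ℝ) T, ∀ y1 y2 : ℝ,
        phi t1 + ε < y1 → y1 < psi t1 - ε → phi t2 + ε < y2 → y2 < psi t2 - ε →
        |b t1 y1 - b t2 y2| ≤ c1 / ε ^ p * (|y1 - y2| + |t1 - t2| ^ lam))
    (hB3low : ∀ t ∈ Set.Icc (0:ℝ) T, ∀ y : ℝ, phi t < y → y ≤ phi t + ystar → y < psi t →
      c2 / (y - phi t) ^ gam ≤ b t y)
    (hB3up : ∀ t ∈ Set.Icc (0:ℝ) T, ∀ y : ℝ, psi t - ystar ≤ y → y < psi t → phi t < y →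
      b t y ≤ -(c2 / (psi t - y) ^ gam))
    (Y0 : ℝ) (hB1 : phi 0 < Y0 ∧ Y0 < psi 0)
    :
    ∃ L1 L2 : ℝ, 0 < L1 ∧ 0 < L2 ∧
      ∀ (Z : ℝ → ℝ) (Lam : ℝ), 0 < Lam → Z 0 = 0 →
        (∀ s ∈ Set.Icc (0:ℝ) T, ∀ t ∈ Set.Icc (0:ℝ) T, |Z t - Z s| ≤ Lam * |t - s| ^ lam) →
        ∀ Y : ℝ → ℝ, ContinuousOn Y (Set.Icc (0:ℝ) T) →
          (∀ t ∈ Set.Icc (0:ℝ) T, phi t < Y t ∧ Y t < psi t) →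
          (∀ t ∈ Set.Icc (0:ℝ) T, Y t = Y0 + (∫ s in (0:ℝ)..t, b s (Y s)) + Z t) →
          ∀ t ∈ Set.Icc (0:ℝ) T,
            phi t + L1 / (L2 + Lam) ^ (1 / (gam * lam + lam - 1)) ≤ Y t ∧
            Y t ≤ psi t - L1 / (L2 + Lam) ^ (1 / (gam * lam + lam - 1)) := by
  obtain ⟨hlam0, hlam1⟩ := hlam
  set q : ℝ := gam * lam + lam - 1 with hqdef
  have hq : 0 < q := by
    have h1 : 1 / lam * lam = 1 := by field_simp
    nlinarith [hgam, hlam0]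
  have hgam0 : 0 < gam := by
    have h1 : 1 < 1 / lam := (one_lt_div hlam0).mpr hlam1
    linarith
  set e : ℝ := 1 / q with hedef
  have he : 0 < e := by positivity
  set C1 : ℝ := (c2 ^ lam * 2 ^ (-(gam * lam))) ^ e with hC1def
  have hC1pos : 0 < C1 := by
    apply Real.rpow_pos_of_pos
    have := Real.rpow_pos_of_pos hc2 lam
    have := Real.rpow_pos_of_pos (by norm_num : (0:ℝ) < 2) (-(gam * lam))
    positivity
  set d1 : ℝ := Y0 - phi 0 with hd1def
  set d2 : ℝ := psi 0 - Y0 with hd2def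
  have hd1 : 0 < d1 := by rw [hd1def]; linarith [hB1.1]
  have hd2 : 0 < d2 := by rw [hd2def]; linarith [hB1.2]
  have hKe : 0 < K ^ e := Real.rpow_pos_of_pos hK e
  refine ⟨min C1 (min (ystar * K ^ e / 2) (min (d1 * K ^ e / 2) (d2 * K ^ e / 2))), K,
    ?_, hK, ?_⟩
  · positivity
  set L1 : ℝ := min C1 (min (ystar * K ^ e / 2) (min (d1 * K ^ e / 2) (d2 * K ^ e / 2)))
    with hL1def
  have hL1pos : 0 < L1 := by positivity
  intro Z Lam hLam hZ0 hZH Y hYcont hYin hYeq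
  set B : ℝ := K + Lam with hBdef
  have hBpos : 0 < B := by rw [hBdef]; linarith
  have hBe : 0 < B ^ e := Real.rpow_pos_of_pos hBpos e
  set x : ℝ := L1 / B ^ e with hxdef
  have hxpos : 0 < x := by positivity
  -- smallness facts
  have hKB : K ≤ B := by rw [hBdef]; linarith
  have hBeK : K ^ e ≤ B ^ e := Real.rpow_le_rpow (le_of_lt hK) hKB (le_of_lt he)
  have hxK : x ≤ L1 / K ^ e := by
    rw [hxdef]
    exact div_le_div_of_nonneg_left (le_of_lt hL1pos) hKe hBeK
  have hsmall : ∀ c : ℝ, L1 ≤ c * K ^ e / 2 → 2 * x ≤ c := by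
    intro c hc
    have h1 : x ≤ (c * K ^ e / 2) / K ^ e :=
      le_trans hxK ((div_le_div_iff_of_pos_right hKe).mpr hc)
    have h2 : (c * K ^ e / 2) / K ^ e = c / 2 := by field_simp
    rw [h2] at h1; linarith
  have hx_ystar : 2 * x ≤ ystar :=
    hsmall ystar (le_trans (min_le_right _ _) (min_le_left _ _))
  have hx_d1 : 2 * x ≤ d1 :=
    hsmall d1 (le_trans (min_le_right _ _) (le_trans (min_le_right _ _) (min_le_left _ _)))
  have hx_d2 : 2 * x ≤ d2 :=
    hsmall d2 (le_trans (min_le_right _ _) (le_trans (min_le_right _ _) (min_le_right _ _)))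
  set A : ℝ := c2 / (2 * x) ^ gam with hAdef
  have h2x : (0:ℝ) < 2 * x := by linarith
  have hApos : 0 < A := div_pos hc2 (Real.rpow_pos_of_pos h2x gam)
  -- the crucial condition B ≤ A^lam * x^(1-lam)
  have hcond : B ≤ A ^ lam * x ^ (1 - lam) := by
    have hAl : A ^ lam = c2 ^ lam * (2 ^ (gam * lam) * x ^ (gam * lam))⁻¹ := by
      rw [hAdef, Real.div_rpow (le_of_lt hc2) (Real.rpow_nonneg (le_of_lt h2x) gam),
        ← Real.rpow_mul (le_of_lt h2x),
        Real.mul_rpow (by norm_num : (0:ℝ) ≤ 2) (le_of_lt hxpos), div_eq_mul_inv]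
    have hxq : x ^ (-q) = L1 ^ (-q) * B := by
      have hx' : x = L1 * (B ^ e)⁻¹ := by rw [hxdef, div_eq_mul_inv]
      rw [hx', ← Real.rpow_neg (le_of_lt hBpos),
        Real.mul_rpow (le_of_lt hL1pos) (Real.rpow_nonneg (le_of_lt hBpos) _),
        ← Real.rpow_mul (le_of_lt hBpos)]
      congr 1
      rw [show -e * -q = e * q by ring, hedef, one_div, inv_mul_cancel₀ (ne_of_gt hq),
        Real.rpow_one]
    have hL1q : L1 ^ q ≤ c2 ^ lam * 2 ^ (-(gam * lam)) := by
      have h1 : L1 ≤ C1 := min_le_left _ _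
      have h2 : L1 ^ q ≤ C1 ^ q := Real.rpow_le_rpow (le_of_lt hL1pos) h1 (le_of_lt hq)
      have h3 : C1 ^ q = c2 ^ lam * 2 ^ (-(gam * lam)) := by
        rw [hC1def, ← Real.rpow_mul, hedef, one_div, inv_mul_cancel₀ (ne_of_gt hq),
          Real.rpow_one]
        have := Real.rpow_pos_of_pos hc2 lam
        have := Real.rpow_pos_of_pos (by norm_num : (0:ℝ) < 2) (-(gam * lam))
        positivity
      linarith
    have hmain : A ^ lam * x ^ (1 - lam) = c2 ^ lam * 2 ^ (-(gam * lam)) * (L1 ^ (-q) * B) := by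
      rw [hAl, ← hxq]
      have hxsplit : x ^ (-q) = x ^ (1 - lam) * (x ^ (gam * lam))⁻¹ := by
        rw [← Real.rpow_neg (le_of_lt hxpos), ← Real.rpow_add hxpos]
        congr 1; rw [hqdef]; ring
      rw [hxsplit, Real.rpow_neg (by norm_num : (0:ℝ) ≤ 2), mul_inv]
      ring
    rw [hmain]
    have hfac : 1 ≤ c2 ^ lam * 2 ^ (-(gam * lam)) * L1 ^ (-q) := by
      have hL1q' : 0 < L1 ^ q := Real.rpow_pos_of_pos hL1pos q
      have hmul : L1 ^ q * (c2 ^ lam * 2 ^ (-(gam * lam)) * L1 ^ (-q)) =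
          c2 ^ lam * 2 ^ (-(gam * lam)) := by
        rw [Real.rpow_neg (le_of_lt hL1pos)]
        field_simp
      nlinarith [hL1q, hL1q']
    calc B = 1 * B := (one_mul B).symm
      _ ≤ c2 ^ lam * 2 ^ (-(gam * lam)) * L1 ^ (-q) * B :=
        mul_le_mul_of_nonneg_right hfac (le_of_lt hBpos)
      _ = c2 ^ lam * 2 ^ (-(gam * lam)) * (L1 ^ (-q) * B) := by ring
  have hmin : ∀ τ : ℝ, 0 ≤ τ → B * τ ^ lam ≤ A * τ + x :=
    fun τ hτ => young_aux hlam0 hlam1 (le_of_lt hApos) (le_of_lt hxpos) hτ (le_of_lt hBpos) hcond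
  -- continuity of the boundaries
  have hphicont : ContinuousOn phi (Set.Icc 0 T) := holder_cont_aux hlam0 hphiH
  have hpsicont : ContinuousOn psi (Set.Icc 0 T) := holder_cont_aux hlam0 hpsiH
  -- continuity and integrability of the drift along the solution
  have hbc : ContinuousOn (fun u => b u (Y u)) (Set.Icc 0 T) := by
    apply hB2cont.comp (continuousOn_id.prodMk hYcont)
    intro u hu
    exact ⟨hu, (hYin u hu).1, (hYin u hu).2⟩
  have hint : ∀ s t : ℝ, 0 ≤ s → s ≤ t → t ≤ T →
      IntervalIntegrable (fun u => b u (Y u)) volume s t := by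
    intro s t hs hst htT
    apply ContinuousOn.intervalIntegrable
    apply hbc.mono
    rw [Set.uIcc_of_le hst]
    exact Set.Icc_subset_Icc hs htT
  have hYdiff : ∀ s t : ℝ, 0 ≤ s → s ≤ t → t ≤ T →
      Y t - Y s = (∫ u in s..t, b u (Y u)) + (Z t - Z s) := by
    intro s t hs hst htT
    have h1 := hYeq s ⟨hs, le_trans hst htT⟩
    have h2 := hYeq t ⟨le_trans hs hst, htT⟩
    have h3 : (∫ u in (0:ℝ)..s, b u (Y u)) + (∫ u in s..t, b u (Y u)) =
        ∫ u in (0:ℝ)..t, b u (Y u) :=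
      intervalIntegral.integral_add_adjacent_intervals
        (hint 0 s le_rfl hs (le_trans hst htT)) (hint s t hs hst htT)
    rw [h1, h2]; linarith
  have hY0 : Y 0 = Y0 := by
    have h1 := hYeq 0 ⟨le_rfl, le_of_lt hT⟩
    simpa [hZ0] using h1
  -- lower bound
  have hlow : ∀ t ∈ Set.Icc (0:ℝ) T, x ≤ Y t - phi t := by
    refine key_aux hxpos (hYcont.sub hphicont) ?_ hmin ?_
    · rw [hY0, ← hd1def]; exact hx_d1
    · intro s t hs hst htT hall
      show A * (t - s) - B * (t - s) ^ lam ≤ (Y t - phi t) - (Y s - phi s)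
      have hsub : Set.Icc s t ⊆ Set.Icc (0:ℝ) T := Set.Icc_subset_Icc hs htT
      have hpt : ∀ u ∈ Set.Icc s t, A ≤ b u (Y u) := by
        intro u hu
        have huT : u ∈ Set.Icc (0:ℝ) T := hsub hu
        have h1 : phi u < Y u := (hYin u huT).1
        have h2 : Y u - phi u ≤ 2 * x := hall u hu
        have h3 : Y u ≤ phi u + ystar := by linarith
        have h4 := hB3low u huT (Y u) h1 h3 (hYin u huT).2
        have h5 : (Y u - phi u) ^ gam ≤ (2 * x) ^ gam :=
          Real.rpow_le_rpow (by linarith) h2 (le_of_lt hgam0)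
        have h6 : 0 < (Y u - phi u) ^ gam := Real.rpow_pos_of_pos (by linarith) gam
        have h7 : A ≤ c2 / (Y u - phi u) ^ gam := by
          rw [hAdef]
          exact div_le_div_of_nonneg_left (le_of_lt hc2) h6 h5
        linarith
      have hmono : (∫ _ in s..t, A) ≤ ∫ u in s..t, b u (Y u) :=
        intervalIntegral.integral_mono_on hst intervalIntegrable_const
          (hint s t hs hst htT) hpt
      rw [intervalIntegral.integral_const, smul_eq_mul] at hmono
      have hZb := hZH s ⟨hs, le_trans hst htT⟩ t ⟨le_trans hs hst, htT⟩
      have hpb := hphiH s ⟨hs, le_trans hst htT⟩ t ⟨le_trans hs hst, htT⟩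
      rw [abs_of_nonneg (by linarith : (0:ℝ) ≤ t - s)] at hZb hpb
      have hZb' : -(Lam * (t - s) ^ lam) ≤ Z t - Z s := by
        have := neg_abs_le (Z t - Z s); linarith
      have hpb' : phi t - phi s ≤ K * (t - s) ^ lam := le_trans (le_abs_self _) hpb
      have hYd := hYdiff s t hs hst htT
      have hBsplit : B * (t - s) ^ lam = K * (t - s) ^ lam + Lam * (t - s) ^ lam := by
        rw [hBdef]; ring
      linarith
  -- upper bound
  have hup : ∀ t ∈ Set.Icc (0:ℝ) T, x ≤ psi t - Y t := by
    refine key_aux hxpos (hpsicont.sub hYcont) ?_ hmin ?_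
    · rw [hY0, ← hd2def]; exact hx_d2
    · intro s t hs hst htT hall
      show A * (t - s) - B * (t - s) ^ lam ≤ (psi t - Y t) - (psi s - Y s)
      have hsub : Set.Icc s t ⊆ Set.Icc (0:ℝ) T := Set.Icc_subset_Icc hs htT
      have hpt : ∀ u ∈ Set.Icc s t, b u (Y u) ≤ -A := by
        intro u hu
        have huT : u ∈ Set.Icc (0:ℝ) T := hsub hu
        have h1 : Y u < psi u := (hYin u huT).2
        have h2 : psi u - Y u ≤ 2 * x := hall u hu
        have h3 : psi u - ystar ≤ Y u := by linarith
        have h4 := hB3up u huT (Y u) h3 h1 (hYin u huT).1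
        have h5 : (psi u - Y u) ^ gam ≤ (2 * x) ^ gam :=
          Real.rpow_le_rpow (by linarith) h2 (le_of_lt hgam0)
        have h6 : 0 < (psi u - Y u) ^ gam := Real.rpow_pos_of_pos (by linarith) gam
        have h7 : A ≤ c2 / (psi u - Y u) ^ gam := by
          rw [hAdef]
          exact div_le_div_of_nonneg_left (le_of_lt hc2) h6 h5
        linarith
      have hmono : (∫ u in s..t, b u (Y u)) ≤ ∫ _ in s..t, -A :=
        intervalIntegral.integral_mono_on hst (hint s t hs hst htT)
          intervalIntegrable_const hpt
      rw [intervalIntegral.integral_const, smul_eq_mul] at hmono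
      have hZb := hZH s ⟨hs, le_trans hst htT⟩ t ⟨le_trans hs hst, htT⟩
      have hpb := hpsiH s ⟨hs, le_trans hst htT⟩ t ⟨le_trans hs hst, htT⟩
      rw [abs_of_nonneg (by linarith : (0:ℝ) ≤ t - s)] at hZb hpb
      have hZb' : Z t - Z s ≤ Lam * (t - s) ^ lam := le_trans (le_abs_self _) hZb
      have hpb' : -(K * (t - s) ^ lam) ≤ psi t - psi s := by
        have := neg_abs_le (psi t - psi s); linarith
      have hYd := hYdiff s t hs hst htT
      have hBsplit : B * (t - s) ^ lam = K * (t - s) ^ lam + Lam * (t - s) ^ lam := by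
        rw [hBdef]; ring
      linarith
  intro t ht
  have h1 := hlow t ht
  have h2 := hup t ht
  constructor <;> linarith
end

section
/- Under Assumptions (A1)–(A3), for every noise path Z (with some Hölder constant Λ > 0) there exists a unique pathwise solution, i.e. a unique continuous function Y : [0,T] → ℝ such that Y(t) > φ(t) for all t ∈ [0,T] and Y(t) = Y(0) + ∫₀ᵗ b(s, Y(s)) ds + Z(t) for all t ∈ [0,T]. -/
open Set MeasureTheory intervalIntegral Filter

lemma holderCont {f : ℝ → ℝ} {A l T : ℝ} (hl : 0 < l)
    (hle : ∀ s ∈ Icc (0:ℝ) T, ∀ t ∈ Icc (0:ℝ) T, |f t - f s| ≤ A * |t - s| ^ l) :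
    ContinuousOn f (Icc 0 T) := by
  intro s hs
  have h1 : Tendsto (fun t : ℝ => A * |t - s| ^ l) (nhdsWithin s (Icc 0 T)) (nhds 0) := by
    have hc : ContinuousAt (fun x : ℝ => x ^ l) 0 :=
      Real.continuousAt_rpow_const 0 l (Or.inr hl.le)
    have h2 : Tendsto (fun t : ℝ => |t - s|) (nhdsWithin s (Icc 0 T)) (nhds 0) := by
      have h2' : Tendsto (fun t : ℝ => |t - s|) (nhds s) (nhds 0) := by
        have := (continuous_id.sub (continuous_const : Continuous fun _ : ℝ => s)).abs.tendsto s
        simpa using this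
      exact h2'.mono_left nhdsWithin_le_nhds
    have h3 := (hc.tendsto.comp h2)
    have h0 : (0:ℝ) ^ l = 0 := Real.zero_rpow hl.ne'
    rw [h0] at h3
    simpa using (tendsto_const_nhds.mul h3 : Tendsto (fun t : ℝ => A * |t - s| ^ l) _ (nhds (A * 0)))
  have key : Tendsto (fun t => dist (f t) (f s)) (nhdsWithin s (Icc 0 T)) (nhds 0) := by
    apply squeeze_zero' (Eventually.of_forall fun t => dist_nonneg) _ h1
    filter_upwards [self_mem_nhdsWithin] with t ht
    rw [Real.dist_eq]; exact hle s hs t ht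
  exact tendsto_iff_dist_tendsto_zero.mpr key

lemma ftc_aux {f g : ℝ → ℝ} {T : ℝ}
    (hd : ∀ t ∈ Icc (0:ℝ) T, HasDerivWithinAt f (g t) (Icc 0 T) t)
    (hg : ContinuousOn g (Icc 0 T)) :
    ∀ t1 ∈ Icc (0:ℝ) T, ∀ t2 ∈ Icc (0:ℝ) T, t1 ≤ t2 →
      ∫ s in t1..t2, g s = f t2 - f t1 := by
  intro t1 ht1 t2 ht2 h12
  have hsub : Icc t1 t2 ⊆ Icc 0 T := Icc_subset_Icc ht1.1 ht2.2
  have hfc : ContinuousOn f (Icc 0 T) := fun t ht => (hd t ht).continuousWithinAt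
  refine integral_eq_sub_of_hasDeriv_right_of_le h12 (hfc.mono hsub) (fun x hx => ?_) ?_
  · have hx' : x ∈ Ioo (0:ℝ) T := ⟨lt_of_le_of_lt ht1.1 hx.1, lt_of_lt_of_le hx.2 ht2.2⟩
    have : HasDerivAt f (g x) x :=
      (hd x (Ioo_subset_Icc_self hx')).hasDerivAt (Icc_mem_nhds hx'.1 hx'.2)
    exact this.hasDerivWithinAt
  · exact (hg.mono hsub).intervalIntegrable_of_Icc h12

lemma proj_cont {T : ℝ} : Continuous (fun s : ℝ => max 0 (min s T)) :=
  continuous_const.max (continuous_id.min continuous_const)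

lemma proj_mem {T : ℝ} (hT : 0 ≤ T) (s : ℝ) : max 0 (min s T) ∈ Icc (0:ℝ) T := by
  constructor
  · exact le_max_left _ _
  · exact max_le hT (min_le_right _ _)

lemma proj_eq {T s : ℝ} (hs : s ∈ Icc (0:ℝ) T) : max 0 (min s T) = s := by
  rw [min_eq_left hs.2, max_eq_right hs.1]

/-- continuity of `s ↦ b s (Y s)` on `[0,T]` -/
lemma bY_cont {T : ℝ} {phi : ℝ → ℝ} {b : ℝ → ℝ → ℝ}
    (hA2cont : ContinuousOn (fun q : ℝ × ℝ => b q.1 q.2)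
      {q : ℝ × ℝ | q.1 ∈ Set.Icc (0:ℝ) T ∧ phi q.1 < q.2})
    {Y : ℝ → ℝ} (hYc : ContinuousOn Y (Icc 0 T)) (hYgt : ∀ t ∈ Icc (0:ℝ) T, phi t < Y t) :
    ContinuousOn (fun s => b s (Y s)) (Icc 0 T) := by
  have : ContinuousOn (fun s : ℝ => ((s, Y s) : ℝ × ℝ)) (Icc 0 T) :=
    (continuousOn_id).prodMk hYc
  exact hA2cont.comp this (fun s hs => ⟨hs, hYgt s hs⟩)

lemma uniq_aux
    (T lam : ℝ) (hT : 0 < T) (hlam : lam ∈ Set.Ioo (0:ℝ) 1)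
    (phi : ℝ → ℝ) (hphic : ContinuousOn phi (Icc 0 T))
    (b : ℝ → ℝ → ℝ) (c1 p : ℝ) (hc1 : 0 < c1)
    (hA2cont : ContinuousOn (fun q : ℝ × ℝ => b q.1 q.2)
      {q : ℝ × ℝ | q.1 ∈ Set.Icc (0:ℝ) T ∧ phi q.1 < q.2})
    (hA2lip : ∀ ε : ℝ, 0 < ε → ε < 1 →
      ∀ t1 ∈ Set.Icc (0:ℝ) T, ∀ t2 ∈ Set.Icc (0:ℝ) T, ∀ y1 y2 : ℝ,
        phi t1 + ε < y1 → phi t2 + ε < y2 →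
        |b t1 y1 - b t2 y2| ≤ c1 / ε ^ p * (|y1 - y2| + |t1 - t2| ^ lam))
    (Y0 : ℝ) (Z : ℝ → ℝ)
    (Y W : ℝ → ℝ)
    (hYc : ContinuousOn Y (Icc 0 T)) (hYgt : ∀ t ∈ Icc (0:ℝ) T, phi t < Y t)
    (hYeq : ∀ t ∈ Icc (0:ℝ) T, Y t = Y0 + (∫ s in (0:ℝ)..t, b s (Y s)) + Z t)
    (hWc : ContinuousOn W (Icc 0 T)) (hWgt : ∀ t ∈ Icc (0:ℝ) T, phi t < W t)
    (hWeq : ∀ t ∈ Icc (0:ℝ) T, W t = Y0 + (∫ s in (0:ℝ)..t, b s (W s)) + Z t) :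
    ∀ t ∈ Icc (0:ℝ) T, Y t = W t := by
  have hT0 : (0:ℝ) ≤ T := hT.le
  -- the minimal gaps
  obtain ⟨x1, hx1, hx1m⟩ := isCompact_Icc.exists_isMinOn (nonempty_Icc.mpr hT0)
    (hYc.sub hphic)
  obtain ⟨x2, hx2, hx2m⟩ := isCompact_Icc.exists_isMinOn (nonempty_Icc.mpr hT0)
    (hWc.sub hphic)
  set m : ℝ := min (min (Y x1 - phi x1) (W x2 - phi x2)) 1 with hm
  have hmpos : 0 < m := by
    apply lt_min (lt_min _ _) one_pos
    · exact sub_pos.mpr (hYgt x1 hx1)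
    · exact sub_pos.mpr (hWgt x2 hx2)
  set ε : ℝ := m / 2 with hε
  have hε0 : 0 < ε := by positivity
  have hε1 : ε < 1 := by
    have : m ≤ 1 := min_le_right _ _
    simp only [hε]; linarith
  have hgapY : ∀ t ∈ Icc (0:ℝ) T, phi t + ε < Y t := by
    intro t ht
    have h1 : Y x1 - phi x1 ≤ Y t - phi t := hx1m ht
    have h2 : m ≤ Y x1 - phi x1 := le_trans (min_le_left _ _) (min_le_left _ _)
    have : ε < m := by simp only [hε]; linarith
    linarith
  have hgapW : ∀ t ∈ Icc (0:ℝ) T, phi t + ε < W t := by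
    intro t ht
    have h1 : W x2 - phi x2 ≤ W t - phi t := hx2m ht
    have h2 : m ≤ W x2 - phi x2 := le_trans (min_le_left _ _) (min_le_right _ _)
    have : ε < m := by simp only [hε]; linarith
    linarith
  set L : ℝ := c1 / ε ^ p with hL
  have hLpos : 0 < L := by
    apply div_pos hc1 (Real.rpow_pos_of_pos hε0 p)
  have hbb : ∀ s ∈ Icc (0:ℝ) T, |b s (Y s) - b s (W s)| ≤ L * |Y s - W s| := by
    intro s hs
    have := hA2lip ε hε0 hε1 s hs s hs (Y s) (W s) (hgapY s hs) (hgapW s hs)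
    have h0 : |s - s| ^ lam = 0 := by
      simp [Real.zero_rpow hlam.1.ne']
    rw [h0] at this
    linarith [this]
  -- globally continuous versions
  set FY : ℝ → ℝ := fun s => b (max 0 (min s T)) (Y (max 0 (min s T))) with hFY
  set FW : ℝ → ℝ := fun s => b (max 0 (min s T)) (W (max 0 (min s T))) with hFW
  have hFYc : Continuous FY :=
    (bY_cont hA2cont hYc hYgt).comp_continuous proj_cont (proj_mem hT0)
  have hFWc : Continuous FW :=
    (bY_cont hA2cont hWc hWgt).comp_continuous proj_cont (proj_mem hT0)
  set u : ℝ → ℝ := fun t => ∫ s in (0:ℝ)..t, (FY s - FW s) with hu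
  have hueq : ∀ t ∈ Icc (0:ℝ) T, u t = Y t - W t := by
    intro t ht
    have hIY : ∫ s in (0:ℝ)..t, b s (Y s) = ∫ s in (0:ℝ)..t, FY s := by
      apply integral_congr
      intro s hs
      rw [uIcc_of_le ht.1] at hs
      have hs' : s ∈ Icc (0:ℝ) T := Icc_subset_Icc le_rfl ht.2 hs
      simp only [hFY, proj_eq hs']
    have hIW : ∫ s in (0:ℝ)..t, b s (W s) = ∫ s in (0:ℝ)..t, FW s := by
      apply integral_congr
      intro s hs
      rw [uIcc_of_le ht.1] at hs
      have hs' : s ∈ Icc (0:ℝ) T := Icc_subset_Icc le_rfl ht.2 hs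
      simp only [hFW, proj_eq hs']
    have : u t = (∫ s in (0:ℝ)..t, FY s) - ∫ s in (0:ℝ)..t, FW s :=
      integral_sub (hFYc.intervalIntegrable _ _) (hFWc.intervalIntegrable _ _)
    rw [this, ← hIY, ← hIW, hYeq t ht, hWeq t ht]
    ring
  have hud : ∀ t : ℝ, HasDerivAt u (FY t - FW t) t := by
    intro t
    exact integral_hasDerivAt_right ((hFYc.sub hFWc).intervalIntegrable _ _)
      ((hFYc.sub hFWc).stronglyMeasurableAtFilter _ _) (hFYc.sub hFWc).continuousAt
  have hgron : ∀ t ∈ Icc (0:ℝ) T, ‖u t‖ ≤ gronwallBound 0 L 0 (t - 0) := by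
    apply norm_le_gronwallBound_of_norm_deriv_right_le
    · exact fun t _ => (hud t).continuousAt.continuousWithinAt
    · exact fun t _ => (hud t).hasDerivWithinAt
    · simp [hu]
    · intro t ht
      have ht' : t ∈ Icc (0:ℝ) T := Ico_subset_Icc_self ht
      have h1 : FY t - FW t = b t (Y t) - b t (W t) := by
        simp only [hFY, hFW, proj_eq ht']
      rw [Real.norm_eq_abs, h1, Real.norm_eq_abs]
      have := hbb t ht'
      rw [← hueq t ht'] at this
      calc |b t (Y t) - b t (W t)| ≤ L * |u t| := this
        _ ≤ L * |u t| + 0 := by linarith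
  intro t ht
  have := hgron t ht
  rw [gronwallBound_ε0_δ0] at this
  have h0 : u t = 0 := by
    have := le_antisymm this (norm_nonneg _)
    exact norm_eq_zero.mp this
  have := hueq t ht
  rw [h0] at this
  linarith [this.symm]

lemma clamp_lip (d M w1 w2 : ℝ) :
    |max d (min w1 M) - max d (min w2 M)| ≤ |w1 - w2| := by
  calc |max d (min w1 M) - max d (min w2 M)|
      ≤ max |d - d| |min w1 M - min w2 M| := abs_max_sub_max_le_max d (min w1 M) d (min w2 M)
    _ ≤ max |d - d| (max |w1 - w2| |M - M|) := by
        apply max_le_max le_rfl (abs_min_sub_min_le_max w1 M w2 M)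
    _ = |w1 - w2| := by simp

-- numeric choice of δm
lemma delta_choice {lam gam A c2 g1 g2 : ℝ}
    (hlam : lam ∈ Set.Ioo (0:ℝ) 1) (hgam : 1 / lam - 1 < gam)
    (hA : 0 < A) (hc2 : 0 < c2) (hg1 : 0 < g1) (hg2 : 0 < g2) :
    ∃ δm : ℝ, 0 < δm ∧ 2 * δm ≤ g1 ∧ 2 * δm ≤ g2 ∧ δm ≤ 1/2 ∧
      (let r := (1 - lam)⁻¹;
       let C0 := A * (A * 2 ^ gam / c2) ^ (r * lam);
       C0 * δm ^ (gam * (r * lam)) < δm) := by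
  obtain ⟨hlam0, hlam1⟩ := hlam
  set r : ℝ := (1 - lam)⁻¹ with hr
  have hrpos : 0 < r := by
    rw [hr]; exact inv_pos.mpr (by linarith)
  have hgam0 : 0 < gam := by
    have h1 : (1:ℝ) < 1 / lam := by
      rw [lt_div_iff₀ hlam0]; linarith
    linarith
  set C0 : ℝ := A * (A * 2 ^ gam / c2) ^ (r * lam) with hC0
  have hbase : (0:ℝ) < A * 2 ^ gam / c2 := by positivity
  have hC0pos : 0 < C0 := by
    rw [hC0]; positivity
  set θ : ℝ := gam * (r * lam) with hθ
  have hθ1 : 1 < θ := by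
    have h1 : 1 - lam < gam * lam := by
      have := hgam
      rw [div_sub' hlam0.ne'] at this
      rw [div_lt_iff₀ hlam0] at this
      linarith [this]
    have h2 : (1 - lam) * r = 1 := by
      rw [hr]; exact mul_inv_cancel₀ (by linarith)
    calc (1:ℝ) = (1 - lam) * r := h2.symm
      _ < (gam * lam) * r := by
          apply mul_lt_mul_of_pos_right h1 hrpos
      _ = θ := by rw [hθ]; ring
  set δcrit : ℝ := ((2 * C0)⁻¹) ^ ((θ - 1)⁻¹) with hδcrit
  have hδcritpos : 0 < δcrit := by
    rw [hδcrit]; positivity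
  refine ⟨min (min (g1/2) (g2/2)) (min (1/2) δcrit), ?_, ?_, ?_, ?_, ?_⟩
  · positivity
  · have : min (min (g1/2) (g2/2)) (min (1/2) δcrit) ≤ g1/2 :=
      le_trans (min_le_left _ _) (min_le_left _ _)
    linarith
  · have : min (min (g1/2) (g2/2)) (min (1/2) δcrit) ≤ g2/2 :=
      le_trans (min_le_left _ _) (min_le_right _ _)
    linarith
  · exact le_trans (min_le_right _ _) (min_le_left _ _)
  · simp only
    set δm : ℝ := min (min (g1/2) (g2/2)) (min (1/2) δcrit) with hδm
    have hδmpos : 0 < δm := by rw [hδm]; positivity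
    have hδmcrit : δm ≤ δcrit := le_trans (min_le_right _ _) (min_le_right _ _)
    have key : δm ^ (θ - 1) ≤ (2 * C0)⁻¹ := by
      calc δm ^ (θ - 1) ≤ δcrit ^ (θ - 1) :=
            Real.rpow_le_rpow hδmpos.le hδmcrit (by linarith)
        _ = ((2 * C0)⁻¹) ^ ((θ - 1)⁻¹ * (θ - 1)) := by
            rw [hδcrit, ← Real.rpow_mul (by positivity)]
        _ = (2 * C0)⁻¹ := by
            rw [inv_mul_cancel₀ (by linarith : θ - 1 ≠ 0), Real.rpow_one]
    have hsplit : δm ^ θ = δm ^ (θ - 1) * δm := by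
      calc δm ^ θ = δm ^ ((θ - 1) + 1) := by congr 1; ring
        _ = δm ^ (θ - 1) * δm ^ (1:ℝ) := Real.rpow_add hδmpos _ _
        _ = δm ^ (θ - 1) * δm := by rw [Real.rpow_one]
    calc C0 * δm ^ (gam * (r * lam)) = C0 * δm ^ θ := by rw [hθ]
      _ = C0 * (δm ^ (θ - 1) * δm) := by rw [hsplit]
      _ ≤ C0 * ((2 * C0)⁻¹ * δm) := by
          apply mul_le_mul_of_nonneg_left _ hC0pos.le
          exact mul_le_mul_of_nonneg_right key hδmpos.le
      _ = δm / 2 := by field_simp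
      _ < δm := by linarith

lemma barrier_contra {lam gam A c2 δm Δ : ℝ}
    (hlam : lam ∈ Set.Ioo (0:ℝ) 1) (hgam0 : 0 < gam) (hA : 0 < A) (hc2 : 0 < c2)
    (hδm : 0 < δm) (hΔ : 0 < Δ)
    (hineq : δm + (c2 / (2*δm)^gam) * Δ ≤ A * Δ^lam)
    (hkey : A * (A * 2^gam / c2) ^ ((1-lam)⁻¹ * lam) * δm ^ (gam * ((1-lam)⁻¹ * lam)) < δm) :
    False := by
  obtain ⟨hlam0, hlam1⟩ := hlam
  set r : ℝ := (1 - lam)⁻¹ with hr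
  have hrpos : 0 < r := inv_pos.mpr (by linarith)
  set B : ℝ := c2 / (2*δm)^gam with hB
  have hBpos : 0 < B := by rw [hB]; positivity
  have hΔlam : 0 < Δ ^ lam := Real.rpow_pos_of_pos hΔ lam
  have h1 : Δ * B ≤ A * Δ ^ lam := by nlinarith [hBpos, hΔ]
  have h2 : Δ ^ (1 - lam) ≤ A / B := by
    rw [Real.rpow_sub hΔ, Real.rpow_one]
    rw [div_le_div_iff₀ hΔlam hBpos]
    linarith [h1]
  have hABpos : 0 < A / B := div_pos hA hBpos
  have h3 : Δ ≤ (A / B) ^ r := by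
    calc Δ = (Δ ^ (1 - lam)) ^ r := by
          rw [← Real.rpow_mul hΔ.le, mul_inv_cancel₀ (by linarith : (1:ℝ) - lam ≠ 0),
            Real.rpow_one]
      _ ≤ (A / B) ^ r := Real.rpow_le_rpow (Real.rpow_nonneg hΔ.le _) h2 hrpos.le
  have h4 : δm ≤ A * Δ ^ lam := by nlinarith [hBpos, hΔ]
  have h5 : Δ ^ lam ≤ (A / B) ^ (r * lam) := by
    calc Δ ^ lam ≤ ((A / B) ^ r) ^ lam :=
          Real.rpow_le_rpow hΔ.le h3 hlam0.le
      _ = (A / B) ^ (r * lam) := by rw [← Real.rpow_mul hABpos.le]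
  have hAB : A / B = (A * 2 ^ gam / c2) * δm ^ gam := by
    rw [hB, div_div_eq_mul_div]
    rw [Real.mul_rpow (by norm_num : (0:ℝ) ≤ 2) hδm.le]
    ring
  have h6 : (A / B) ^ (r * lam) = (A * 2 ^ gam / c2) ^ (r * lam) * δm ^ (gam * (r * lam)) := by
    rw [hAB, Real.mul_rpow (by positivity) (by positivity)]
    rw [← Real.rpow_mul hδm.le]
  have h7 : δm ≤ A * ((A * 2 ^ gam / c2) ^ (r * lam) * δm ^ (gam * (r * lam))) := by
    calc δm ≤ A * Δ ^ lam := h4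
      _ ≤ A * (A / B) ^ (r * lam) := mul_le_mul_of_nonneg_left h5 hA.le
      _ = A * ((A * 2 ^ gam / c2) ^ (r * lam) * δm ^ (gam * (r * lam))) := by rw [h6]
  rw [← mul_assoc] at h7
  linarith

lemma hitting_times {T δ : ℝ} {h : ℝ → ℝ} (hT : 0 < T) (hδ : 0 < δ)
    (hc : ContinuousOn h (Icc 0 T)) (h0 : 2*δ ≤ h 0)
    (hex : ∃ t ∈ Icc (0:ℝ) T, h t ≤ δ) :
    ∃ t1 t2, t1 ∈ Icc (0:ℝ) T ∧ t2 ∈ Icc (0:ℝ) T ∧ t1 < t2 ∧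
      (∀ s ∈ Icc t1 t2, δ ≤ h s ∧ h s ≤ 2*δ) ∧ h t1 - h t2 = δ := by
  obtain ⟨te, hte, htev⟩ := hex
  -- first time h hits δ
  set S : Set ℝ := Icc 0 T ∩ h ⁻¹' (Iic δ) with hS
  have hSc : IsClosed S := hc.preimage_isClosed_of_isClosed isClosed_Icc isClosed_Iic
  have hSne : S.Nonempty := ⟨te, hte, htev⟩
  have hSbdd : BddBelow S := ⟨0, fun x hx => hx.1.1⟩
  set t2 := sInf S with ht2def
  have ht2S : t2 ∈ S := hSc.csInf_mem hSne hSbdd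
  have ht2T : t2 ∈ Icc (0:ℝ) T := ht2S.1
  have h0notS : (0:ℝ) ∉ S := by
    intro h0S
    have := h0S.2
    simp only [mem_preimage, mem_Iic] at this
    linarith
  have ht2pos : 0 < t2 := by
    rcases lt_or_eq_of_le ht2T.1 with h' | h'
    · exact h'
    · exact absurd (h' ▸ ht2S) h0notS
  have hlt : ∀ s ∈ Ico (0:ℝ) t2, δ < h s := by
    intro s hs
    by_contra hcon
    push_neg at hcon
    have hsS : s ∈ S := ⟨⟨hs.1, le_trans hs.2.le ht2T.2⟩, by simpa using hcon⟩
    exact absurd (csInf_le hSbdd hsS) (not_le.mpr hs.2)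
  have ht2val : h t2 = δ := by
    have hle : h t2 ≤ δ := by simpa using ht2S.2
    have hge : δ ≤ h t2 := by
      have hne : (nhdsWithin t2 (Ico 0 t2)).NeBot := by
        rw [← mem_closure_iff_nhdsWithin_neBot, closure_Ico ht2pos.ne]
        exact ⟨ht2T.1, le_rfl⟩
      have htd : Tendsto h (nhdsWithin t2 (Ico 0 t2)) (nhds (h t2)) :=
        (hc t2 ht2T).mono_left (nhdsWithin_mono _ (fun x hx => ⟨hx.1, le_trans hx.2.le ht2T.2⟩))
      have hev : ∀ᶠ s in nhdsWithin t2 (Ico 0 t2), δ ≤ h s := by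
        filter_upwards [self_mem_nhdsWithin] with s hs
        exact (hlt s hs).le
      exact ge_of_tendsto htd hev
    linarith
  -- last time before t2 that h = 2δ
  set S2 : Set ℝ := Icc 0 t2 ∩ h ⁻¹' (Ici (2*δ)) with hS2
  have hIccsub : Icc (0:ℝ) t2 ⊆ Icc 0 T := Icc_subset_Icc le_rfl ht2T.2
  have hS2c : IsClosed S2 := (hc.mono hIccsub).preimage_isClosed_of_isClosed isClosed_Icc isClosed_Ici
  have hS2ne : S2.Nonempty := ⟨0, ⟨le_rfl, ht2pos.le⟩, by simpa using h0⟩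
  have hS2bdd : BddAbove S2 := ⟨t2, fun x hx => hx.1.2⟩
  set t1 := sSup S2 with ht1def
  have ht1S : t1 ∈ S2 := hS2c.csSup_mem hS2ne hS2bdd
  have ht1mem : t1 ∈ Icc (0:ℝ) t2 := ht1S.1
  have ht1ge : 2*δ ≤ h t1 := ht1S.2
  have ht1ne : t1 ≠ t2 := by
    intro hcon
    rw [hcon, ht2val] at ht1ge
    linarith
  have ht1lt : t1 < t2 := lt_of_le_of_ne ht1mem.2 ht1ne
  have ht1T : t1 ∈ Icc (0:ℝ) T := ⟨ht1mem.1, le_trans ht1mem.2 ht2T.2⟩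
  have hmid : ∀ s ∈ Ioc t1 t2, h s < 2*δ := by
    intro s hs
    by_contra hcon
    push_neg at hcon
    have hsS2 : s ∈ S2 := ⟨⟨le_trans ht1mem.1 hs.1.le, hs.2⟩, by simpa using hcon⟩
    exact absurd (le_csSup hS2bdd hsS2) (not_le.mpr hs.1)
  have ht1val : h t1 = 2*δ := by
    have hle : h t1 ≤ 2*δ := by
      have hne : (nhdsWithin t1 (Ioc t1 t2)).NeBot := by
        rw [← mem_closure_iff_nhdsWithin_neBot, closure_Ioc ht1ne]
        exact ⟨le_rfl, ht1lt.le⟩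
      have htd : Tendsto h (nhdsWithin t1 (Ioc t1 t2)) (nhds (h t1)) :=
        (hc t1 ht1T).mono_left (nhdsWithin_mono _
          (fun x hx => ⟨le_trans ht1mem.1 hx.1.le, le_trans hx.2 ht2T.2⟩))
      have hev : ∀ᶠ s in nhdsWithin t1 (Ioc t1 t2), h s ≤ 2*δ := by
        filter_upwards [self_mem_nhdsWithin] with s hs
        exact (hmid s hs).le
      exact le_of_tendsto htd hev
    linarith
  refine ⟨t1, t2, ht1T, ht2T, ht1lt, ?_, by rw [ht1val, ht2val]; ring⟩
  intro s hs
  constructor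
  · rcases lt_or_eq_of_le hs.2 with h' | h'
    · exact (hlt s ⟨le_trans ht1mem.1 hs.1, h'⟩).le
    · rw [h', ht2val]
  · rcases lt_or_eq_of_le hs.1 with h' | h'
    · exact (hmid s ⟨h', hs.2⟩).le
    · rw [← h', ht1val]

lemma strip_bound {T δm Mhi : ℝ} {phi : ℝ → ℝ} {b : ℝ → ℝ → ℝ}
    (hT : 0 ≤ T) (hδm : 0 < δm) (hM : δm ≤ Mhi)
    (hphic : ContinuousOn phi (Icc 0 T))
    (hA2cont : ContinuousOn (fun q : ℝ × ℝ => b q.1 q.2)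
      {q : ℝ × ℝ | q.1 ∈ Set.Icc (0:ℝ) T ∧ phi q.1 < q.2}) :
    ∃ Bd : ℝ, 0 ≤ Bd ∧ ∀ t ∈ Icc (0:ℝ) T, ∀ u ∈ Icc δm Mhi, |b t (phi t + u)| ≤ Bd := by
  set Kc : Set (ℝ × ℝ) := (Icc (0:ℝ) T) ×ˢ (Icc δm Mhi) with hKc
  have hKcomp : IsCompact Kc := isCompact_Icc.prod isCompact_Icc
  have hKne : Kc.Nonempty := ⟨(0, δm), ⟨⟨le_rfl, hT⟩, le_rfl, hM⟩⟩
  have hinner : ContinuousOn (fun q : ℝ × ℝ => ((q.1, phi q.1 + q.2) : ℝ × ℝ)) Kc := by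
    apply ContinuousOn.prodMk continuousOn_fst
    exact ((hphic.comp continuousOn_fst (fun q hq => hq.1)).add continuousOn_snd)
  have hmaps : ∀ q ∈ Kc, ((q.1, phi q.1 + q.2) : ℝ × ℝ) ∈
      {q : ℝ × ℝ | q.1 ∈ Set.Icc (0:ℝ) T ∧ phi q.1 < q.2} := by
    intro q hq
    exact ⟨hq.1, by have := hq.2.1; simp only; linarith⟩
  have hfc : ContinuousOn (fun q : ℝ × ℝ => |b q.1 (phi q.1 + q.2)|) Kc :=
    (hA2cont.comp hinner hmaps).abs
  obtain ⟨q0, hq0, hq0max⟩ := hKcomp.exists_isMaxOn hKne hfc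
  refine ⟨|b q0.1 (phi q0.1 + q0.2)|, abs_nonneg _, ?_⟩
  intro t ht u hu
  exact hq0max (⟨ht, hu⟩ : (t, u) ∈ Kc)

set_option maxHeartbeats 2000000 in
lemma exist_aux
    (T lam : ℝ) (hT : 0 < T) (hlam : lam ∈ Set.Ioo (0:ℝ) 1)
    (phi : ℝ → ℝ) (K : ℝ) (hK : 0 < K)
    (hphiH : ∀ s ∈ Set.Icc (0:ℝ) T, ∀ t ∈ Set.Icc (0:ℝ) T, |phi t - phi s| ≤ K * |t - s| ^ lam)
    (b : ℝ → ℝ → ℝ) (c1 p c2 ystar gam : ℝ)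
    (hc1 : 0 < c1) (hp : 1 < p) (hc2 : 0 < c2) (hystar : 0 < ystar)
    (hgam : 1 / lam - 1 < gam)
    (hA2cont : ContinuousOn (fun q : ℝ × ℝ => b q.1 q.2)
      {q : ℝ × ℝ | q.1 ∈ Set.Icc (0:ℝ) T ∧ phi q.1 < q.2})
    (hA2lip : ∀ ε : ℝ, 0 < ε → ε < 1 →
      ∀ t1 ∈ Set.Icc (0:ℝ) T, ∀ t2 ∈ Set.Icc (0:ℝ) T, ∀ y1 y2 : ℝ,
        phi t1 + ε < y1 → phi t2 + ε < y2 →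
        |b t1 y1 - b t2 y2| ≤ c1 / ε ^ p * (|y1 - y2| + |t1 - t2| ^ lam))
    (hA3 : ∀ t ∈ Set.Icc (0:ℝ) T, ∀ y : ℝ, phi t < y → y ≤ phi t + ystar →
      c2 / (y - phi t) ^ gam ≤ b t y)
    (Y0 : ℝ) (hA1 : phi 0 < Y0)
    (Z : ℝ → ℝ) (Lam : ℝ) (hLam : 0 < Lam) (hZ0 : Z 0 = 0)
    (hZH : ∀ s ∈ Set.Icc (0:ℝ) T, ∀ t ∈ Set.Icc (0:ℝ) T, |Z t - Z s| ≤ Lam * |t - s| ^ lam) :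
    ∃ Y : ℝ → ℝ,
      ContinuousOn Y (Set.Icc (0:ℝ) T) ∧
        (∀ t ∈ Set.Icc (0:ℝ) T, phi t < Y t) ∧
        (∀ t ∈ Set.Icc (0:ℝ) T, Y t = Y0 + (∫ s in (0:ℝ)..t, b s (Y s)) + Z t) := by
  obtain ⟨hlam0, hlam1⟩ := hlam
  have hT0 : (0:ℝ) ≤ T := hT.le
  have h0mem : (0:ℝ) ∈ Icc (0:ℝ) T := ⟨le_rfl, hT0⟩
  have hgam0 : 0 < gam := by
    have h1 : (1:ℝ) < 1 / lam := by
      rw [lt_div_iff₀ hlam0]; linarith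
    linarith
  have hphiC : ContinuousOn phi (Icc 0 T) := holderCont hlam0 hphiH
  have hZC : ContinuousOn Z (Icc 0 T) := holderCont hlam0 hZH
  -- Hölder sup bounds
  have hTlam : 0 ≤ K * T ^ lam := by positivity
  have hphib : ∀ t ∈ Icc (0:ℝ) T, |phi t - phi 0| ≤ K * T ^ lam := by
    intro t ht
    calc |phi t - phi 0| ≤ K * |t - 0| ^ lam := hphiH 0 h0mem t ht
      _ ≤ K * T ^ lam := by
        apply mul_le_mul_of_nonneg_left _ hK.le
        rw [sub_zero, abs_of_nonneg ht.1]
        exact Real.rpow_le_rpow ht.1 ht.2 hlam0.le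
  have hZb : ∀ t ∈ Icc (0:ℝ) T, |Z t| ≤ Lam * T ^ lam := by
    intro t ht
    have := hZH 0 h0mem t ht
    rw [hZ0, sub_zero, sub_zero] at this
    calc |Z t| ≤ Lam * |t| ^ lam := this
      _ ≤ Lam * T ^ lam := by
        apply mul_le_mul_of_nonneg_left _ hLam.le
        rw [abs_of_nonneg ht.1]
        exact Real.rpow_le_rpow ht.1 ht.2 hlam0.le
  -- choice of δm
  set A : ℝ := Lam + K with hAdef
  have hA : 0 < A := by rw [hAdef]; linarith
  obtain ⟨δm, hδm0, hg1, hg2, hδhalf, hkey⟩ :=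
    delta_choice ⟨hlam0, hlam1⟩ hgam hA hc2 (sub_pos.mpr hA1 : 0 < Y0 - phi 0) hystar
  simp only [] at hkey
  set ε : ℝ := δm / 2 with hεdef
  have hε0 : 0 < ε := by positivity
  have hε1 : ε < 1 := by rw [hεdef]; linarith
  set L : ℝ := c1 / ε ^ p with hLdef
  have hL0 : 0 < L := div_pos hc1 (Real.rpow_pos_of_pos hε0 p)
  -- upper bounds
  set W0 : ℝ := Y0 + Lam * T ^ lam + K * T ^ lam - phi 0 with hW0def
  have hW0w : ∀ t ∈ Icc (0:ℝ) T, Y0 + Z t - phi t ≤ W0 := by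
    intro t ht
    have h1 := abs_le.mp (hZb t ht)
    have h2 := abs_le.mp (hphib t ht)
    rw [hW0def]; linarith [h1.2, h2.1]
  set U0 : ℝ := max δm W0 with hU0def
  have hδU0 : δm ≤ U0 := le_max_left _ _
  obtain ⟨B0, hB00, hB0⟩ := strip_bound hT0 hδm0 hδU0 hphiC hA2cont
  set Q : ℝ := gronwallBound 0 L B0 T with hQdef
  have hQform : ∀ x : ℝ, gronwallBound 0 L B0 x = B0 / L * (Real.exp (L * x) - 1) := by
    intro x
    rw [gronwallBound_of_K_ne_0 hL0.ne']
    simp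
  have hQ0 : 0 ≤ Q := by
    rw [hQdef, hQform]
    have h1 : (1:ℝ) ≤ Real.exp (L * T) := Real.one_le_exp (by positivity)
    have h2 : 0 ≤ B0 / L := by positivity
    exact mul_nonneg h2 (by linarith)
  set M : ℝ := max U0 (max (2*δm) (Q + W0)) with hMdef
  have hδM : δm ≤ M := le_trans hδU0 (le_max_left _ _)
  have h2δM : 2*δm ≤ M := le_trans (le_max_left _ _) (le_max_right _ _)
  have hQWM : Q + W0 ≤ M := le_trans (le_max_right _ _) (le_max_right _ _)
  obtain ⟨BM, hBM0, hBM⟩ := strip_bound hT0 hδm0 hδM hphiC hA2cont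
  -- clamp
  set cl : ℝ → ℝ := fun w => max δm (min w M) with hcldef
  have hcl1 : ∀ w, δm ≤ cl w := fun w => le_max_left _ _
  have hcl2 : ∀ w, cl w ≤ M := fun w => max_le hδM (min_le_right _ _)
  have hclw : ∀ w, δm ≤ w → w ≤ M → cl w = w := by
    intro w h1 h2
    rw [hcldef]; simp only [min_eq_left h2, max_eq_right h1]
  have hclU : ∀ w, w ≤ W0 → cl w ≤ U0 := by
    intro w hw
    rw [hcldef]
    apply max_le hδU0
    exact le_trans (min_le_left _ _) (le_trans hw (le_max_right _ _))
  have hclLip : ∀ w1 w2, |cl w1 - cl w2| ≤ |w1 - w2| := fun w1 w2 => clamp_lip δm M w1 w2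
  -- the regularized field
  set v : ℝ → ℝ → ℝ := fun t x =>
    b (max 0 (min t T)) (phi (max 0 (min t T)) +
      cl (x + Z (max 0 (min t T)) - phi (max 0 (min t T)))) with hvdef
  have hvb : ∀ t x, |v t x| ≤ BM := by
    intro t x
    exact hBM _ (proj_mem hT0 t) _ ⟨hcl1 _, hcl2 _⟩
  have hvY0 : ∀ t, |v t Y0| ≤ B0 := by
    intro t
    refine hB0 _ (proj_mem hT0 t) _ ⟨hcl1 _, hclU _ (hW0w _ (proj_mem hT0 t))⟩
  have hvlip : ∀ t x1 x2, |v t x1 - v t x2| ≤ L * |x1 - x2| := by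
    intro t x1 x2
    set pt := max 0 (min t T) with hptdef
    have hpt : pt ∈ Icc (0:ℝ) T := proj_mem hT0 t
    have hgap1 : phi pt + ε < phi pt + cl (x1 + Z pt - phi pt) := by
      have := hcl1 (x1 + Z pt - phi pt)
      have : ε < cl (x1 + Z pt - phi pt) := by rw [hεdef]; linarith
      linarith
    have hgap2 : phi pt + ε < phi pt + cl (x2 + Z pt - phi pt) := by
      have := hcl1 (x2 + Z pt - phi pt)
      have : ε < cl (x2 + Z pt - phi pt) := by rw [hεdef]; linarith
      linarith
    have h1 := hA2lip ε hε0 hε1 pt hpt pt hpt _ _ hgap1 hgap2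
    have h2 : |pt - pt| ^ lam = 0 := by
      simp [Real.zero_rpow hlam0.ne']
    rw [h2, add_zero] at h1
    have h3 : (phi pt + cl (x1 + Z pt - phi pt)) - (phi pt + cl (x2 + Z pt - phi pt))
        = cl (x1 + Z pt - phi pt) - cl (x2 + Z pt - phi pt) := by ring
    rw [h3] at h1
    have h4 : |cl (x1 + Z pt - phi pt) - cl (x2 + Z pt - phi pt)| ≤ |x1 - x2| := by
      calc |cl (x1 + Z pt - phi pt) - cl (x2 + Z pt - phi pt)|
          ≤ |(x1 + Z pt - phi pt) - (x2 + Z pt - phi pt)| := hclLip _ _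
        _ = |x1 - x2| := by congr 1; ring
    calc |v t x1 - v t x2| ≤ c1 / ε ^ p * |cl (x1 + Z pt - phi pt) - cl (x2 + Z pt - phi pt)| := h1
      _ ≤ L * |x1 - x2| := by
          rw [hLdef]
          apply mul_le_mul_of_nonneg_left h4 (by positivity)
  -- continuity of v in t
  have hprojC : Continuous (fun t : ℝ => max 0 (min t T)) := proj_cont
  have hphiPC : Continuous (fun t : ℝ => phi (max 0 (min t T))) :=
    hphiC.comp_continuous hprojC (proj_mem hT0)
  have hZPC : Continuous (fun t : ℝ => Z (max 0 (min t T))) :=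
    hZC.comp_continuous hprojC (proj_mem hT0)
  have hclC : Continuous cl := by
    rw [hcldef]
    exact continuous_const.max (continuous_id.min continuous_const)
  have hvcont : ∀ x : ℝ, Continuous (fun t => v t x) := by
    intro x
    have hinner : Continuous (fun t : ℝ => ((max 0 (min t T),
        phi (max 0 (min t T)) + cl (x + Z (max 0 (min t T)) - phi (max 0 (min t T)))) : ℝ × ℝ)) := by
      apply Continuous.prodMk hprojC
      exact hphiPC.add (hclC.comp ((continuous_const.add hZPC).sub hphiPC))
    have hmaps : ∀ t : ℝ, ((max 0 (min t T),
        phi (max 0 (min t T)) + cl (x + Z (max 0 (min t T)) - phi (max 0 (min t T)))) : ℝ × ℝ) ∈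
        {q : ℝ × ℝ | q.1 ∈ Set.Icc (0:ℝ) T ∧ phi q.1 < q.2} := by
      intro t
      refine ⟨proj_mem hT0 t, ?_⟩
      have := hcl1 (x + Z (max 0 (min t T)) - phi (max 0 (min t T)))
      simp only
      linarith
    exact hA2cont.comp_continuous hinner hmaps
  -- Picard–Lindelöf
  have hLnn : ((Real.toNNReal L : NNReal) : ℝ) = L := Real.coe_toNNReal L hL0.le
  have isPL : IsPicardLindelof v (⟨0, h0mem⟩ : Icc (0:ℝ) T) Y0 (Real.toNNReal (BM * T)) 0
      (Real.toNNReal BM) (Real.toNNReal L) := by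
    constructor
    · intro t _
      apply LipschitzOnWith.of_dist_le_mul
      intro x _ y _
      rw [Real.dist_eq, Real.dist_eq, hLnn]
      exact hvlip t x y
    · intro x _
      exact (hvcont x).continuousOn
    · intro t _ x _
      rw [Real.norm_eq_abs, Real.coe_toNNReal _ hBM0]
      exact hvb t x
    · show (Real.toNNReal BM : ℝ) * max (T - 0) (0 - 0) ≤ (Real.toNNReal (BM * T) : ℝ) - ((0 : NNReal) : ℝ)
      simp only [NNReal.coe_zero, sub_zero, max_eq_left hT0, Real.coe_toNNReal _ hBM0,
        Real.coe_toNNReal _ (mul_nonneg hBM0 hT0), le_refl]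
  obtain ⟨α, hα0', hαd⟩ := isPL.exists_eq_forall_mem_Icc_hasDerivWithinAt₀
  have hα0 : α 0 = Y0 := hα0'
  set g : ℝ → ℝ := fun s => v s (α s) with hgdef
  have hαc : ContinuousOn α (Icc 0 T) := fun t ht => (hαd t ht).continuousWithinAt
  have hgc : ContinuousOn g (Icc 0 T) := by
    have hinner : ContinuousOn (fun s : ℝ => ((max 0 (min s T),
        phi (max 0 (min s T)) + cl (α s + Z (max 0 (min s T)) - phi (max 0 (min s T)))) : ℝ × ℝ))
        (Icc 0 T) := by
      apply ContinuousOn.prodMk hprojC.continuousOn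
      exact hphiPC.continuousOn.add
        (hclC.comp_continuousOn ((hαc.add hZPC.continuousOn).sub hphiPC.continuousOn))
    have hmaps : ∀ s ∈ Icc (0:ℝ) T, ((max 0 (min s T),
        phi (max 0 (min s T)) + cl (α s + Z (max 0 (min s T)) - phi (max 0 (min s T)))) : ℝ × ℝ) ∈
        {q : ℝ × ℝ | q.1 ∈ Set.Icc (0:ℝ) T ∧ phi q.1 < q.2} := by
      intro s _
      refine ⟨proj_mem hT0 s, ?_⟩
      have := hcl1 (α s + Z (max 0 (min s T)) - phi (max 0 (min s T)))
      simp only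
      linarith
    exact hA2cont.comp hinner hmaps
  have hFTC := ftc_aux hαd hgc
  -- a priori bound via Grönwall
  have hβd : ∀ t ∈ Ico (0:ℝ) T, HasDerivWithinAt (fun t => α t - Y0) (g t) (Ici t) t := by
    intro t ht
    have h1 := (hαd t (Ico_subset_Icc_self ht)).sub_const Y0
    apply h1.mono_of_mem_nhdsWithin
    rw [mem_nhdsWithin]
    exact ⟨Iio T, isOpen_Iio, ht.2, fun x hx => ⟨le_trans ht.1 hx.2, hx.1.le⟩⟩
  have hβb : ∀ t ∈ Ico (0:ℝ) T, ‖g t‖ ≤ L * ‖α t - Y0‖ + B0 := by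
    intro t _
    rw [Real.norm_eq_abs, Real.norm_eq_abs]
    have h1 := hvlip t (α t) Y0
    have h2 := hvY0 t
    calc |g t| = |(v t (α t) - v t Y0) + v t Y0| := by rw [hgdef]; ring_nf
      _ ≤ |v t (α t) - v t Y0| + |v t Y0| := abs_add_le _ _
      _ ≤ L * |α t - Y0| + B0 := add_le_add h1 h2
  have hβG := norm_le_gronwallBound_of_norm_deriv_right_le (δ := 0) (K := L) (ε := B0)
    (hαc.sub continuousOn_const) hβd (by simp [hα0]) hβb
  have hαb : ∀ t ∈ Icc (0:ℝ) T, |α t - Y0| ≤ Q := by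
    intro t ht
    have h1 := hβG t ht
    rw [Real.norm_eq_abs] at h1
    calc |α t - Y0| ≤ gronwallBound 0 L B0 (t - 0) := h1
      _ ≤ Q := by
        rw [hQdef, hQform, hQform, sub_zero]
        have h2 : Real.exp (L * t) ≤ Real.exp (L * T) :=
          Real.exp_le_exp.mpr (mul_le_mul_of_nonneg_left ht.2 hL0.le)
        have h3 : 0 ≤ B0 / L := by positivity
        exact mul_le_mul_of_nonneg_left (by linarith) h3
  -- lower/upper envelope facts for h := α + Z - phi
  have hh0 : 2*δm ≤ α 0 + Z 0 - phi 0 := by rw [hα0, hZ0]; linarith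
  have hhc : ContinuousOn (fun t => α t + Z t - phi t) (Icc 0 T) := (hαc.add hZC).sub hphiC
  have hhub : ∀ t ∈ Icc (0:ℝ) T, α t + Z t - phi t ≤ M := by
    intro t ht
    have h1 := (abs_le.mp (hαb t ht)).2
    have h2 := (abs_le.mp (hZb t ht)).2
    have h3 := (abs_le.mp (hphib t ht)).1
    have h4 : α t + Z t - phi t ≤ Q + W0 := by rw [hW0def]; linarith
    linarith [hQWM]
  have hvαeq : ∀ s ∈ Icc (0:ℝ) T, δm ≤ α s + Z s - phi s → v s (α s) = b s (α s + Z s) := by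
    intro s hs hband
    have hps : max 0 (min s T) = s := proj_eq hs
    have heqM : α s + Z s - phi s ≤ M := hhub s hs
    calc v s (α s)
        = b s (phi s + cl (α s + Z s - phi s)) := by rw [hvdef]; simp only [hps]
      _ = b s (phi s + (α s + Z s - phi s)) := by rw [hclw _ hband heqM]
      _ = b s (α s + Z s) := by congr 1; ring
  -- barrier argument
  have hbar : ∀ t ∈ Icc (0:ℝ) T, δm < α t + Z t - phi t := by
    by_contra hcon
    push_neg at hcon
    obtain ⟨te, hte, htele⟩ := hcon
    obtain ⟨t1, t2, ht1T, ht2T, ht12, hband, hdrop⟩ :=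
      hitting_times hT hδm0 hhc hh0 ⟨te, hte, htele⟩
    have hdrift : ∀ s ∈ Icc t1 t2, c2 / (2*δm)^gam ≤ v s (α s) := by
      intro s hss
      have hs : s ∈ Icc (0:ℝ) T := ⟨le_trans ht1T.1 hss.1, le_trans hss.2 ht2T.2⟩
      obtain ⟨hlo, hhi⟩ := hband s hss
      have heq := hvαeq s hs hlo
      have hA3' := hA3 s hs (α s + Z s) (by linarith) (by linarith)
      have hrle : (α s + Z s - phi s) ^ gam ≤ (2*δm) ^ gam :=
        Real.rpow_le_rpow (by linarith) hhi hgam0.le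
      have hrpos : (0:ℝ) < (α s + Z s - phi s) ^ gam :=
        Real.rpow_pos_of_pos (by linarith) gam
      have hstep : c2 / (2*δm)^gam ≤ c2 / (α s + Z s - phi s) ^ gam := by
        rw [div_le_div_iff₀ (by positivity) hrpos]
        exact mul_le_mul_of_nonneg_left hrle hc2.le
      calc c2 / (2*δm)^gam ≤ c2 / (α s + Z s - phi s) ^ gam := hstep
        _ ≤ b s (α s + Z s) := by
            have harg : α s + Z s - phi s = (α s + Z s) - phi s := by ring
            rw [harg]
            exact hA3'
        _ = v s (α s) := heq.symm
    have hgint : IntervalIntegrable (fun s => v s (α s)) volume t1 t2 :=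
      (hgc.mono (Icc_subset_Icc ht1T.1 ht2T.2)).intervalIntegrable_of_Icc ht12.le
    have hIeq := hFTC t1 ht1T t2 ht2T ht12.le
    have hmono : c2/(2*δm)^gam * (t2 - t1) ≤ α t2 - α t1 := by
      have h1 := intervalIntegral.integral_mono_on ht12.le
        (_root_.intervalIntegrable_const (c := c2/(2*δm)^gam)) hgint hdrift
      rw [intervalIntegral.integral_const, smul_eq_mul, hIeq] at h1
      linarith
    have hZ12 := abs_le.mp (hZH t1 ht1T t2 ht2T)
    have hphi12 := abs_le.mp (hphiH t1 ht1T t2 ht2T)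
    have habs : |t2 - t1| = t2 - t1 := abs_of_pos (sub_pos.mpr ht12)
    rw [habs] at hZ12 hphi12
    have hfinal : δm + (c2/(2*δm)^gam) * (t2 - t1) ≤ A * (t2 - t1)^lam := by
      have e1 : Z t1 - Z t2 ≤ Lam * (t2 - t1)^lam := by linarith [hZ12.1]
      have e2 : phi t2 - phi t1 ≤ K * (t2 - t1)^lam := hphi12.2
      have e3 : (α t1 + Z t1 - phi t1) - (α t2 + Z t2 - phi t2) = δm := hdrop
      have e12 : Z t1 - Z t2 + (phi t2 - phi t1) ≤ A * (t2 - t1)^lam := by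
        calc Z t1 - Z t2 + (phi t2 - phi t1)
            ≤ Lam * (t2 - t1)^lam + K * (t2 - t1)^lam := by linarith
          _ = A * (t2 - t1)^lam := by rw [hAdef]; ring
      linarith [hmono]
    exact barrier_contra ⟨hlam0, hlam1⟩ hgam0 hA hc2 hδm0 (sub_pos.mpr ht12) hfinal hkey
  -- final assembly
  refine ⟨fun t => α t + Z t, hαc.add hZC, ?_, ?_⟩
  · intro t ht
    have := hbar t ht
    simp only
    linarith
  · intro t ht
    have hIeq := hFTC 0 h0mem t ht ht.1
    rw [hα0] at hIeq
    have hcongr : ∫ s in (0:ℝ)..t, v s (α s) = ∫ s in (0:ℝ)..t, b s (α s + Z s) := by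
      apply integral_congr
      intro s hs
      rw [uIcc_of_le ht.1] at hs
      have hs' : s ∈ Icc (0:ℝ) T := ⟨hs.1, le_trans hs.2 ht.2⟩
      exact hvαeq s hs' (hbar s hs').le
    simp only
    rw [← hcongr, hIeq]
    ring

theorem stmt_2
    (T lam : ℝ) (hT : 0 < T) (hlam : lam ∈ Set.Ioo (0:ℝ) 1)
    (phi : ℝ → ℝ) (K : ℝ) (hK : 0 < K)
    (hphiH : ∀ s ∈ Set.Icc (0:ℝ) T, ∀ t ∈ Set.Icc (0:ℝ) T, |phi t - phi s| ≤ K * |t - s| ^ lam)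
    (b : ℝ → ℝ → ℝ) (c1 p c2 ystar gam : ℝ)
    (hc1 : 0 < c1) (hp : 1 < p) (hc2 : 0 < c2) (hystar : 0 < ystar)
    (hgam : 1 / lam - 1 < gam)
    (hA2cont : ContinuousOn (fun q : ℝ × ℝ => b q.1 q.2)
      {q : ℝ × ℝ | q.1 ∈ Set.Icc (0:ℝ) T ∧ phi q.1 < q.2})
    (hA2lip : ∀ ε : ℝ, 0 < ε → ε < 1 →
      ∀ t1 ∈ Set.Icc (0:ℝ) T, ∀ t2 ∈ Set.Icc (0:ℝ) T, ∀ y1 y2 : ℝ,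
        phi t1 + ε < y1 → phi t2 + ε < y2 →
        |b t1 y1 - b t2 y2| ≤ c1 / ε ^ p * (|y1 - y2| + |t1 - t2| ^ lam))
    (hA3 : ∀ t ∈ Set.Icc (0:ℝ) T, ∀ y : ℝ, phi t < y → y ≤ phi t + ystar →
      c2 / (y - phi t) ^ gam ≤ b t y)
    (Y0 : ℝ) (hA1 : phi 0 < Y0)
    (Z : ℝ → ℝ) (Lam : ℝ) (hLam : 0 < Lam) (hZ0 : Z 0 = 0)
    (hZH : ∀ s ∈ Set.Icc (0:ℝ) T, ∀ t ∈ Set.Icc (0:ℝ) T, |Z t - Z s| ≤ Lam * |t - s| ^ lam)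
    :
    ∃ Y : ℝ → ℝ,
      (ContinuousOn Y (Set.Icc (0:ℝ) T) ∧
        (∀ t ∈ Set.Icc (0:ℝ) T, phi t < Y t) ∧
        (∀ t ∈ Set.Icc (0:ℝ) T, Y t = Y0 + (∫ s in (0:ℝ)..t, b s (Y s)) + Z t)) ∧
      ∀ Y2 : ℝ → ℝ,
        (ContinuousOn Y2 (Set.Icc (0:ℝ) T) ∧
          (∀ t ∈ Set.Icc (0:ℝ) T, phi t < Y2 t) ∧
          (∀ t ∈ Set.Icc (0:ℝ) T, Y2 t = Y0 + (∫ s in (0:ℝ)..t, b s (Y2 s)) + Z t)) →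
        ∀ t ∈ Set.Icc (0:ℝ) T, Y2 t = Y t := by
  obtain ⟨Y, hYc, hYgt, hYeq⟩ := exist_aux T lam hT hlam phi K hK hphiH b c1 p c2 ystar gam
    hc1 hp hc2 hystar hgam hA2cont hA2lip hA3 Y0 hA1 Z Lam hLam hZ0 hZH
  refine ⟨Y, ⟨hYc, hYgt, hYeq⟩, ?_⟩
  rintro Y2 ⟨hY2c, hY2gt, hY2eq⟩
  exact uniq_aux T lam hT hlam phi (holderCont hlam.1 hphiH) b c1 p hc1 hA2cont hA2lip
    Y0 Z Y2 Y hY2c hY2gt hY2eq hYc hYgt hYeq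
end

section
/- Under Assumptions (B2)–(B4), for every Δ > 0 with c3·Δ < 1, every t ∈ [0,T] and every z ∈ ℝ, the equation y − b(t,y)·Δ = z has a unique solution y with φ(t) < y < ψ(t). -/
open MeasureTheory

theorem stmt_4
    (T lam : ℝ) (hT : 0 < T) (hlam : lam ∈ Set.Ioo (0:ℝ) 1)
    (phi psi : ℝ → ℝ) (K : ℝ) (hK : 0 < K)
    (hphiH : ∀ s ∈ Set.Icc (0:ℝ) T, ∀ t ∈ Set.Icc (0:ℝ) T, |phi t - phi s| ≤ K * |t - s| ^ lam)
    (hpsiH : ∀ s ∈ Set.Icc (0:ℝ) T, ∀ t ∈ Set.Icc (0:ℝ) T, |psi t - psi s| ≤ K * |t - s| ^ lam)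
    (hphipsi : ∀ t ∈ Set.Icc (0:ℝ) T, phi t < psi t)
    (b : ℝ → ℝ → ℝ) (c1 p c2 ystar gam : ℝ)
    (hc1 : 0 < c1) (hp : 1 < p) (hc2 : 0 < c2) (hystar : 0 < ystar)
    (hgam : 1 / lam - 1 < gam)
    (hB2cont : ContinuousOn (fun q : ℝ × ℝ => b q.1 q.2)
      {q : ℝ × ℝ | q.1 ∈ Set.Icc (0:ℝ) T ∧ phi q.1 < q.2 ∧ q.2 < psi q.1})
    (hB2lip : ∀ ε : ℝ, 0 < ε → ε < min 1 ((⨆ t : Set.Icc (0:ℝ) T, |psi t.1 - phi t.1|) / 2) →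
      ∀ t1 ∈ Set.Icc (0:ℝ) T, ∀ t2 ∈ Set.Icc (0:ℝ) T, ∀ y1 y2 : ℝ,
        phi t1 + ε < y1 → y1 < psi t1 - ε → phi t2 + ε < y2 → y2 < psi t2 - ε →
        |b t1 y1 - b t2 y2| ≤ c1 / ε ^ p * (|y1 - y2| + |t1 - t2| ^ lam))
    (hB3low : ∀ t ∈ Set.Icc (0:ℝ) T, ∀ y : ℝ, phi t < y → y ≤ phi t + ystar → y < psi t →
      c2 / (y - phi t) ^ gam ≤ b t y)
    (hB3up : ∀ t ∈ Set.Icc (0:ℝ) T, ∀ y : ℝ, psi t - ystar ≤ y → y < psi t → phi t < y →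
      b t y ≤ -(c2 / (psi t - y) ^ gam))
    (bp : ℝ → ℝ → ℝ) (c3 : ℝ) (hc3 : 0 < c3)
    (hB4deriv : ∀ t ∈ Set.Icc (0:ℝ) T, ∀ y : ℝ, phi t < y → y < psi t →
      HasDerivAt (fun x => b t x) (bp t y) y)
    (hB4cont : ContinuousOn (fun q : ℝ × ℝ => bp q.1 q.2)
      {q : ℝ × ℝ | q.1 ∈ Set.Icc (0:ℝ) T ∧ phi q.1 < q.2 ∧ q.2 < psi q.1})
    (hB4lt : ∀ t ∈ Set.Icc (0:ℝ) T, ∀ y : ℝ, phi t < y → y < psi t → bp t y < c3)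
    :
    ∀ Δ : ℝ, 0 < Δ → c3 * Δ < 1 → ∀ t ∈ Set.Icc (0:ℝ) T, ∀ z : ℝ,
      ∃! y : ℝ, phi t < y ∧ y < psi t ∧ y - b t y * Δ = z := by

  intro Δ hΔ hc3Δ t ht z
  have hac : phi t < psi t := hphipsi t ht
  have h1lam : 1 < 1 / lam := by
    rw [lt_div_iff₀ hlam.1]; linarith [hlam.2]
  have hγ : 0 < gam := by linarith [hgam]
  set f : ℝ → ℝ := fun y => y - b t y * Δ with hf
  have hderiv : ∀ y ∈ Set.Ioo (phi t) (psi t), HasDerivAt f (1 - bp t y * Δ) y := by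
    intro y hy
    exact (hasDerivAt_id y).sub ((hB4deriv t ht y hy.1 hy.2).mul_const Δ)
  have hcont : ContinuousOn f (Set.Ioo (phi t) (psi t)) := fun y hy =>
    (hderiv y hy).continuousAt.continuousWithinAt
  have smono : StrictMonoOn f (Set.Ioo (phi t) (psi t)) := by
    apply strictMonoOn_of_deriv_pos (convex_Ioo _ _) hcont
    intro y hy
    rw [interior_Ioo] at hy
    rw [(hderiv y hy).deriv]
    have h1 := hB4lt t ht y hy.1 hy.2
    nlinarith [mul_lt_mul_of_pos_right h1 hΔ]
  have hrpow_cont : ContinuousAt (fun x : ℝ => x ^ gam) 0 :=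
    Real.continuousAt_rpow_const 0 gam (Or.inr hγ.le)
  -- lower side
  have hlow : ∃ y1 ∈ Set.Ioo (phi t) (psi t), f y1 ≤ z := by
    have tsub0 : Filter.Tendsto (fun y => y - phi t) (nhdsWithin (phi t) (Set.Ioi (phi t)))
        (nhdsWithin 0 (Set.Ioi 0)) := by
      rw [tendsto_nhdsWithin_iff]
      constructor
      · have h1 : Filter.Tendsto (fun y : ℝ => y - phi t) (nhds (phi t)) (nhds (phi t - phi t)) :=
          (continuous_id.sub continuous_const).tendsto _
        rw [sub_self] at h1
        exact h1.mono_left nhdsWithin_le_nhds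
      · filter_upwards [self_mem_nhdsWithin] with y hy
        exact sub_pos.mpr (Set.mem_Ioi.mp hy)
    have tpow : Filter.Tendsto (fun y => (y - phi t) ^ gam)
        (nhdsWithin (phi t) (Set.Ioi (phi t))) (nhdsWithin 0 (Set.Ioi 0)) := by
      rw [tendsto_nhdsWithin_iff]
      constructor
      · have h2 := hrpow_cont.tendsto.comp (tsub0.mono_right nhdsWithin_le_nhds)
        rwa [Real.zero_rpow hγ.ne'] at h2
      · filter_upwards [self_mem_nhdsWithin] with y hy
        exact Real.rpow_pos_of_pos (sub_pos.mpr hy) gam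
    have tinv : Filter.Tendsto (fun y => ((y - phi t) ^ gam)⁻¹)
        (nhdsWithin (phi t) (Set.Ioi (phi t))) Filter.atTop := tpow.inv_tendsto_nhdsGT_zero
    have tmul : Filter.Tendsto (fun y => (Δ * c2) * ((y - phi t) ^ gam)⁻¹)
        (nhdsWithin (phi t) (Set.Ioi (phi t))) Filter.atTop :=
      tinv.const_mul_atTop (by positivity)
    have tg : Filter.Tendsto (fun y => y - (Δ * c2) * ((y - phi t) ^ gam)⁻¹)
        (nhdsWithin (phi t) (Set.Ioi (phi t))) Filter.atBot := by
      have hid : Filter.Tendsto (fun y : ℝ => y)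
          (nhdsWithin (phi t) (Set.Ioi (phi t))) (nhds (phi t)) :=
        Filter.tendsto_id.mono_right nhdsWithin_le_nhds
      have := hid.add_atBot (Filter.tendsto_neg_atBot_iff.mpr tmul)
      refine this.congr fun y => by ring
    have hev : ∀ᶠ y in nhdsWithin (phi t) (Set.Ioi (phi t)),
        y ∈ Set.Ioo (phi t) (psi t) ∧ y ≤ phi t + ystar ∧
          y - (Δ * c2) * ((y - phi t) ^ gam)⁻¹ ≤ z := by
      have hmem : Set.Ioo (phi t) (min (psi t) (phi t + ystar)) ∈
          nhdsWithin (phi t) (Set.Ioi (phi t)) :=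
        Ioo_mem_nhdsGT_of_mem ⟨le_refl _, lt_min hac (by linarith)⟩
      filter_upwards [hmem, tg.eventually_le_atBot z] with y hy hyz
      exact ⟨⟨hy.1, lt_of_lt_of_le hy.2 (min_le_left _ _)⟩,
        le_of_lt (lt_of_lt_of_le hy.2 (min_le_right _ _)), hyz⟩
    obtain ⟨y1, hy1, hy1s, hy1z⟩ := hev.exists
    refine ⟨y1, hy1, ?_⟩
    have hb := hB3low t ht y1 hy1.1 hy1s hy1.2
    have hpos : (0:ℝ) < (y1 - phi t) ^ gam := Real.rpow_pos_of_pos (sub_pos.mpr hy1.1) gam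
    have : c2 / (y1 - phi t) ^ gam * Δ = (Δ * c2) * ((y1 - phi t) ^ gam)⁻¹ := by
      field_simp
    have hble : c2 / (y1 - phi t) ^ gam * Δ ≤ b t y1 * Δ :=
      mul_le_mul_of_nonneg_right hb hΔ.le
    simp only [hf]
    linarith [hy1z, this ▸ hble]
  -- upper side
  have hupp : ∃ y2 ∈ Set.Ioo (phi t) (psi t), z ≤ f y2 := by
    have tsub0 : Filter.Tendsto (fun y => psi t - y) (nhdsWithin (psi t) (Set.Iio (psi t)))
        (nhdsWithin 0 (Set.Ioi 0)) := by
      rw [tendsto_nhdsWithin_iff]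
      constructor
      · have h1 : Filter.Tendsto (fun y : ℝ => psi t - y) (nhds (psi t)) (nhds (psi t - psi t)) :=
          (continuous_const.sub continuous_id).tendsto _
        rw [sub_self] at h1
        exact h1.mono_left nhdsWithin_le_nhds
      · filter_upwards [self_mem_nhdsWithin] with y hy
        exact sub_pos.mpr (Set.mem_Iio.mp hy)
    have tpow : Filter.Tendsto (fun y => (psi t - y) ^ gam)
        (nhdsWithin (psi t) (Set.Iio (psi t))) (nhdsWithin 0 (Set.Ioi 0)) := by
      rw [tendsto_nhdsWithin_iff]
      constructor
      · have h2 := hrpow_cont.tendsto.comp (tsub0.mono_right nhdsWithin_le_nhds)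
        rwa [Real.zero_rpow hγ.ne'] at h2
      · filter_upwards [self_mem_nhdsWithin] with y hy
        exact Real.rpow_pos_of_pos (sub_pos.mpr hy) gam
    have tinv : Filter.Tendsto (fun y => ((psi t - y) ^ gam)⁻¹)
        (nhdsWithin (psi t) (Set.Iio (psi t))) Filter.atTop := tpow.inv_tendsto_nhdsGT_zero
    have tmul : Filter.Tendsto (fun y => (Δ * c2) * ((psi t - y) ^ gam)⁻¹)
        (nhdsWithin (psi t) (Set.Iio (psi t))) Filter.atTop :=
      tinv.const_mul_atTop (by positivity)
    have tg : Filter.Tendsto (fun y => y + (Δ * c2) * ((psi t - y) ^ gam)⁻¹)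
        (nhdsWithin (psi t) (Set.Iio (psi t))) Filter.atTop := by
      have hid : Filter.Tendsto (fun y : ℝ => y)
          (nhdsWithin (psi t) (Set.Iio (psi t))) (nhds (psi t)) :=
        Filter.tendsto_id.mono_right nhdsWithin_le_nhds
      have := hid.add_atTop tmul
      refine this.congr fun y => by ring
    have hev : ∀ᶠ y in nhdsWithin (psi t) (Set.Iio (psi t)),
        y ∈ Set.Ioo (phi t) (psi t) ∧ psi t - ystar ≤ y ∧
          z ≤ y + (Δ * c2) * ((psi t - y) ^ gam)⁻¹ := by
      have hmem : Set.Ioo (max (phi t) (psi t - ystar)) (psi t) ∈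
          nhdsWithin (psi t) (Set.Iio (psi t)) :=
        Ioo_mem_nhdsLT_of_mem ⟨max_lt hac (by linarith), le_refl _⟩
      filter_upwards [hmem, tg.eventually_ge_atTop z] with y hy hyz
      exact ⟨⟨lt_of_le_of_lt (le_max_left _ _) hy.1, hy.2⟩,
        le_of_lt (lt_of_le_of_lt (le_max_right _ _) hy.1), hyz⟩
    obtain ⟨y2, hy2, hy2s, hy2z⟩ := hev.exists
    refine ⟨y2, hy2, ?_⟩
    have hb := hB3up t ht y2 hy2s hy2.2 hy2.1
    have hpos : (0:ℝ) < (psi t - y2) ^ gam := Real.rpow_pos_of_pos (sub_pos.mpr hy2.2) gam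
    have heq : c2 / (psi t - y2) ^ gam * Δ = (Δ * c2) * ((psi t - y2) ^ gam)⁻¹ := by
      field_simp
    have hble : b t y2 * Δ ≤ -(c2 / (psi t - y2) ^ gam) * Δ :=
      mul_le_mul_of_nonneg_right hb hΔ.le
    simp only [hf]
    have : -(c2 / (psi t - y2) ^ gam) * Δ = -((Δ * c2) * ((psi t - y2) ^ gam)⁻¹) := by
      rw [← heq]; ring
    linarith [hy2z, this ▸ hble]
  obtain ⟨y1, hy1, hy1z⟩ := hlow
  obtain ⟨y2, hy2, hy2z⟩ := hupp
  have hy12 : y1 ≤ y2 := by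
    by_contra h
    push_neg at h
    have := smono hy2 hy1 h
    linarith
  have hsub : Set.Icc y1 y2 ⊆ Set.Ioo (phi t) (psi t) := fun x hx =>
    ⟨lt_of_lt_of_le hy1.1 hx.1, lt_of_le_of_lt hx.2 hy2.2⟩
  obtain ⟨y, hyIcc, hfy⟩ := intermediate_value_Icc hy12 (hcont.mono hsub) ⟨hy1z, hy2z⟩
  have hyIoo : y ∈ Set.Ioo (phi t) (psi t) := hsub hyIcc
  refine ⟨y, ⟨hyIoo.1, hyIoo.2, hfy⟩, ?_⟩
  rintro y' ⟨h1, h2, h3⟩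
  exact smono.injOn ⟨h1, h2⟩ hyIoo (by rw [show f y' = y' - b t y' * Δ from rfl, h3, ← hfy])
end

section
/- Under Assumptions (A2)–(A4), for every Δ > 0 with c3·Δ < 1, every t ∈ [0,T] and every z ∈ ℝ, the equation y − b(t,y)·Δ = z has a unique solution y with y > φ(t). In particular, under (A2) and (A4) there exists a constant C > 0 such that b(t,y) ≤ C + c3·y for all t ∈ [0,T] and all y ≥ φ(t) + 1. -/
open MeasureTheory

theorem stmt_5
    (T lam : ℝ) (hT : 0 < T) (hlam : lam ∈ Set.Ioo (0:ℝ) 1)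
    (phi : ℝ → ℝ) (K : ℝ) (hK : 0 < K)
    (hphiH : ∀ s ∈ Set.Icc (0:ℝ) T, ∀ t ∈ Set.Icc (0:ℝ) T, |phi t - phi s| ≤ K * |t - s| ^ lam)
    (b : ℝ → ℝ → ℝ) (c1 p c2 ystar gam : ℝ)
    (hc1 : 0 < c1) (hp : 1 < p) (hc2 : 0 < c2) (hystar : 0 < ystar)
    (hgam : 1 / lam - 1 < gam)
    (hA2cont : ContinuousOn (fun q : ℝ × ℝ => b q.1 q.2)
      {q : ℝ × ℝ | q.1 ∈ Set.Icc (0:ℝ) T ∧ phi q.1 < q.2})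
    (hA2lip : ∀ ε : ℝ, 0 < ε → ε < 1 →
      ∀ t1 ∈ Set.Icc (0:ℝ) T, ∀ t2 ∈ Set.Icc (0:ℝ) T, ∀ y1 y2 : ℝ,
        phi t1 + ε < y1 → phi t2 + ε < y2 →
        |b t1 y1 - b t2 y2| ≤ c1 / ε ^ p * (|y1 - y2| + |t1 - t2| ^ lam))
    (hA3 : ∀ t ∈ Set.Icc (0:ℝ) T, ∀ y : ℝ, phi t < y → y ≤ phi t + ystar →
      c2 / (y - phi t) ^ gam ≤ b t y)
    (bp : ℝ → ℝ → ℝ) (c3 : ℝ) (hc3 : 0 < c3)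
    (hA4deriv : ∀ t ∈ Set.Icc (0:ℝ) T, ∀ y : ℝ, phi t < y →
      HasDerivAt (fun x => b t x) (bp t y) y)
    (hA4cont : ContinuousOn (fun q : ℝ × ℝ => bp q.1 q.2)
      {q : ℝ × ℝ | q.1 ∈ Set.Icc (0:ℝ) T ∧ phi q.1 < q.2})
    (hA4lt : ∀ t ∈ Set.Icc (0:ℝ) T, ∀ y : ℝ, phi t < y → bp t y < c3)
    :
    (∀ Δ : ℝ, 0 < Δ → c3 * Δ < 1 → ∀ t ∈ Set.Icc (0:ℝ) T, ∀ z : ℝ,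
      ∃! y : ℝ, phi t < y ∧ y - b t y * Δ = z) ∧
    ∃ C : ℝ, 0 < C ∧ ∀ t ∈ Set.Icc (0:ℝ) T, ∀ y : ℝ, phi t + 1 ≤ y → b t y ≤ C + c3 * y := by
  obtain ⟨hlam0, hlam1⟩ := hlam
  have h1lam : 1 < 1 / lam := (one_lt_div hlam0).mpr hlam1
  have hgam0 : 0 < gam := by linarith
  -- boundedness of phi
  have h0T : (0:ℝ) ∈ Set.Icc (0:ℝ) T := ⟨le_refl 0, hT.le⟩
  have hphiBound : ∀ t ∈ Set.Icc (0:ℝ) T, |phi t| ≤ |phi 0| + K * T ^ lam := by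
    intro t ht
    have h1 := hphiH 0 h0T t ht
    have h2 : |t - 0| = t := by rw [sub_zero, abs_of_nonneg ht.1]
    rw [h2] at h1
    have h3 : t ^ lam ≤ T ^ lam := Real.rpow_le_rpow ht.1 ht.2 hlam0.le
    have h4 : K * t ^ lam ≤ K * T ^ lam := mul_le_mul_of_nonneg_left h3 hK.le
    have h5 : |phi t| - |phi 0| ≤ |phi t - phi 0| := abs_sub_abs_le_abs_sub _ _
    linarith
  -- continuity of phi
  have hphiCont : ContinuousOn phi (Set.Icc (0:ℝ) T) := by
    intro s hs
    have h2 : Filter.Tendsto (fun t : ℝ => |t - s|) (nhdsWithin s (Set.Icc (0:ℝ) T)) (nhds 0) := by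
      have h : ContinuousWithinAt (fun t : ℝ => |t - s|) (Set.Icc (0:ℝ) T) s :=
        ((continuous_id.sub continuous_const).abs).continuousWithinAt
      have h' : Filter.Tendsto (fun t : ℝ => |t - s|) (nhdsWithin s (Set.Icc (0:ℝ) T))
          (nhds |s - s|) := h
      simpa using h'
    have h3 : Filter.Tendsto (fun x : ℝ => K * x ^ lam) (nhds 0) (nhds 0) := by
      have h4 : ContinuousAt (fun x : ℝ => x ^ lam) 0 :=
        Real.continuousAt_rpow_const 0 lam (Or.inr hlam0.le)
      have h5 : ContinuousAt (fun x : ℝ => K * x ^ lam) 0 := continuousAt_const.mul h4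
      simpa [ContinuousAt, Real.zero_rpow hlam0.ne'] using h5
    have h1 : Filter.Tendsto (fun t => K * |t - s| ^ lam)
        (nhdsWithin s (Set.Icc (0:ℝ) T)) (nhds 0) := h3.comp h2
    have hb : ∀ᶠ t in nhdsWithin s (Set.Icc (0:ℝ) T), dist (phi t) (phi s) ≤ K * |t - s| ^ lam :=
      Filter.eventually_of_mem self_mem_nhdsWithin
        (fun t ht => by rw [Real.dist_eq]; exact hphiH s hs t ht)
    exact tendsto_iff_dist_tendsto_zero.mpr
      (squeeze_zero' (Filter.Eventually.of_forall fun t => dist_nonneg) hb h1)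
  -- maximum of b t (phi t + 1)
  have hgcont : ContinuousOn (fun t => b t (phi t + 1)) (Set.Icc (0:ℝ) T) := by
    have hmap : Set.MapsTo (fun t => (t, phi t + 1)) (Set.Icc (0:ℝ) T)
        {q : ℝ × ℝ | q.1 ∈ Set.Icc (0:ℝ) T ∧ phi q.1 < q.2} :=
      fun t ht => ⟨ht, lt_add_one _⟩
    exact hA2cont.comp (continuousOn_id.prodMk (hphiCont.add continuousOn_const)) hmap
  obtain ⟨t0, ht0, hM'⟩ := isCompact_Icc.exists_isMaxOn (Set.nonempty_Icc.mpr hT.le) hgcont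
  have hM : ∀ t ∈ Set.Icc (0:ℝ) T, b t (phi t + 1) ≤ b t0 (phi t0 + 1) := fun t ht => hM' ht
  set C : ℝ := max 1 (b t0 (phi t0 + 1) + c3 * (|phi 0| + K * T ^ lam + 1)) with hCdef
  have hCpos : 0 < C := lt_of_lt_of_le one_pos (le_max_left _ _)
  have hC1 : b t0 (phi t0 + 1) + c3 * (|phi 0| + K * T ^ lam + 1) ≤ C := le_max_right _ _
  -- key monotonicity lemma
  have key : ∀ t ∈ Set.Icc (0:ℝ) T, ∀ Δ : ℝ, 0 < Δ → c3 * Δ ≤ 1 →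
      StrictMonoOn (fun x => x - b t x * Δ) (Set.Ioi (phi t)) := by
    intro t ht Δ hΔ hΔ1
    have hderiv : ∀ y ∈ Set.Ioi (phi t),
        HasDerivAt (fun x => x - b t x * Δ) (1 - bp t y * Δ) y :=
      fun y hy => (hasDerivAt_id y).sub ((hA4deriv t ht y hy).mul_const Δ)
    apply strictMonoOn_of_deriv_pos (convex_Ioi _)
    · intro y hy
      exact ((hderiv y hy).continuousAt).continuousWithinAt
    · intro y hy
      rw [interior_Ioi] at hy
      rw [(hderiv y hy).deriv]
      have h1 := hA4lt t ht y hy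
      have h2 : bp t y * Δ < c3 * Δ := mul_lt_mul_of_pos_right h1 hΔ
      linarith
  have key2 : ∀ t ∈ Set.Icc (0:ℝ) T,
      StrictMonoOn (fun x => c3 * x - b t x) (Set.Ioi (phi t)) := by
    intro t ht
    have hderiv : ∀ y ∈ Set.Ioi (phi t),
        HasDerivAt (fun x => c3 * x - b t x) (c3 - bp t y) y :=
      fun y hy => by have h := ((hasDerivAt_id y).const_mul c3).sub (hA4deriv t ht y hy); rw [mul_one] at h; exact h
    apply strictMonoOn_of_deriv_pos (convex_Ioi _)
    · intro y hy
      exact ((hderiv y hy).continuousAt).continuousWithinAt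
    · intro y hy
      rw [interior_Ioi] at hy
      rw [(hderiv y hy).deriv]
      have h1 := hA4lt t ht y hy
      linarith
  -- growth bound
  have hgrow : ∀ t ∈ Set.Icc (0:ℝ) T, ∀ y : ℝ, phi t + 1 ≤ y → b t y ≤ C + c3 * y := by
    intro t ht y hy
    have hm1 : phi t + 1 ∈ Set.Ioi (phi t) := Set.mem_Ioi.mpr (by linarith)
    have hm2 : y ∈ Set.Ioi (phi t) := Set.mem_Ioi.mpr (by linarith)
    have h3 := (key2 t ht).monotoneOn hm1 hm2 hy
    have hbM : b t (phi t + 1) ≤ b t0 (phi t0 + 1) := hM t ht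
    have hφ : |phi t| ≤ |phi 0| + K * T ^ lam := hphiBound t ht
    have hφ2 : -(|phi 0| + K * T ^ lam) ≤ phi t := by
      have := neg_abs_le (phi t); linarith
    nlinarith [mul_le_mul_of_nonneg_left hφ2 hc3.le]
  refine ⟨?_, ⟨C, hCpos, hgrow⟩⟩
  intro Δ hΔ hΔ1 t ht z
  have hmonoF := key t ht Δ hΔ hΔ1.le
  have hF' : ∀ y : ℝ, phi t < y →
      HasDerivAt (fun x => x - b t x * Δ) (1 - bp t y * Δ) y :=
    fun y hy => (hasDerivAt_id y).sub ((hA4deriv t ht y hy).mul_const Δ)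
  -- lower endpoint
  set R : ℝ := max 1 (phi t + 1 - z) with hRdef
  have hR : 0 < R := lt_of_lt_of_le one_pos (le_max_left _ _)
  have hR2 : phi t + 1 - z ≤ R := le_max_right _ _
  have hcΔR : 0 < c2 * Δ / R := by positivity
  set δ : ℝ := min (min ystar 1) ((c2 * Δ / R) ^ (1 / gam)) with hδdef
  have hδpos : 0 < δ :=
    lt_min (lt_min hystar one_pos) (Real.rpow_pos_of_pos hcΔR _)
  have hδystar : δ ≤ ystar := le_trans (min_le_left _ _) (min_le_left _ _)
  have hδ1 : δ ≤ 1 := le_trans (min_le_left _ _) (min_le_right _ _)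
  have hδg : δ ^ gam ≤ c2 * Δ / R := by
    have h1 : δ ^ gam ≤ ((c2 * Δ / R) ^ (1 / gam)) ^ gam :=
      Real.rpow_le_rpow hδpos.le (min_le_right _ _) hgam0.le
    have h2 : ((c2 * Δ / R) ^ (1 / gam)) ^ gam = c2 * Δ / R := by
      rw [← Real.rpow_mul hcΔR.le, one_div_mul_cancel hgam0.ne', Real.rpow_one]
    rwa [h2] at h1
  have hδgpos : 0 < δ ^ gam := Real.rpow_pos_of_pos hδpos _
  have hRδ : R ≤ c2 * Δ / δ ^ gam := by
    rw [le_div_iff₀ hδgpos]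
    have h1 : δ ^ gam * R ≤ c2 * Δ := (le_div_iff₀ hR).mp hδg
    linarith [mul_comm R (δ ^ gam)]
  set a : ℝ := phi t + δ with hadef
  have haIoi : phi t < a := by simp only [hadef]; linarith
  have hFa : a - b t a * Δ ≤ z := by
    have hba : c2 / (a - phi t) ^ gam ≤ b t a :=
      hA3 t ht a haIoi (by simp only [hadef]; linarith)
    have hsub : a - phi t = δ := by simp only [hadef]; ring
    rw [hsub] at hba
    have h1 : c2 / δ ^ gam * Δ ≤ b t a * Δ := mul_le_mul_of_nonneg_right hba hΔ.le
    have h2 : c2 / δ ^ gam * Δ = c2 * Δ / δ ^ gam := by ring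
    have h3 : phi t + 1 - z ≤ c2 * Δ / δ ^ gam := le_trans hR2 hRδ
    simp only [hadef]
    linarith
  -- upper endpoint
  have h1c : 0 < 1 - c3 * Δ := by linarith
  set y0 : ℝ := max (phi t + 1) ((z + C * Δ) / (1 - c3 * Δ)) with hy0def
  have hy0ge : phi t + 1 ≤ y0 := le_max_left _ _
  have hFy0 : z ≤ y0 - b t y0 * Δ := by
    have hb := hgrow t ht y0 hy0ge
    have h1 : b t y0 * Δ ≤ (C + c3 * y0) * Δ := mul_le_mul_of_nonneg_right hb hΔ.le
    have h2 : z + C * Δ ≤ y0 * (1 - c3 * Δ) := by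
      have := (div_le_iff₀ h1c).mp (le_max_right (phi t + 1) ((z + C * Δ) / (1 - c3 * Δ)))
      linarith
    nlinarith
  have hay0 : a ≤ y0 := by simp only [hadef]; linarith
  have hFcont : ContinuousOn (fun x => x - b t x * Δ) (Set.Icc a y0) := by
    intro x hx
    have hxIoi : phi t < x := lt_of_lt_of_le haIoi hx.1
    exact ((hF' x hxIoi).continuousAt).continuousWithinAt
  have hz : z ∈ Set.Icc (a - b t a * Δ) (y0 - b t y0 * Δ) := ⟨hFa, hFy0⟩
  obtain ⟨y, hyIcc, hFy⟩ := intermediate_value_Icc hay0 hFcont hz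
  have hyIoi : phi t < y := lt_of_lt_of_le haIoi hyIcc.1
  refine ⟨y, ⟨hyIoi, hFy⟩, ?_⟩
  rintro w ⟨hw1, hw2⟩
  exact hmonoF.injOn (Set.mem_Ioi.mpr hw1) (Set.mem_Ioi.mpr hyIoi) (by show w - b t w * Δ = y - b t y * Δ; rw [hw2]; exact hFy.symm)
end

section
/- Under Assumptions (B1)–(B4), there exist constants L1 > 0 and L2 > 0, depending only on Y(0), φ, ψ, the drift b (through c1, c2, p, y_*, γ), λ and T (in particular not on Z, Λ or N), such that for every noise path Z with Hölder constant Λ and every N with c3·Δ_N < 1, the drift-implicit Euler scheme satisfies φ(t_n) + L1/(L2 + Λ)^{1/(γλ+λ−1)} ≤ Ŷ(t_n) ≤ ψ(t_n) − L1/(L2 + Λ)^{1/(γλ+λ−1)} for all n = 0, 1, …, N. -/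
open MeasureTheory

lemma young_aux_s6 (lam a C τ : ℝ) (h0 : 0 < lam) (h1 : lam < 1) (ha : 0 < a) (hC : 0 < C)
    (hτ : 0 < τ) :
    C * τ ^ lam ≤ a * τ + (1 - lam) * (C * (lam / a) ^ lam) ^ (1 / (1 - lam)) := by
  have h1l : (0:ℝ) < 1 - lam := by linarith
  set p₁ : ℝ := a * τ / lam with hp₁def
  set p₂ : ℝ := (C * (lam / a) ^ lam) ^ (1 / (1 - lam)) with hp₂def
  have hp₁ : 0 < p₁ := by positivity
  have hbase : 0 < C * (lam / a) ^ lam := by positivity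
  have hp₂ : 0 < p₂ := Real.rpow_pos_of_pos hbase _
  have key := Real.geom_mean_le_arith_mean2_weighted h0.le h1l.le hp₁.le hp₂.le (by ring)
  have hp₂pow : p₂ ^ (1 - lam) = C * (lam / a) ^ lam := by
    rw [hp₂def, ← Real.rpow_mul hbase.le, one_div_mul_cancel h1l.ne', Real.rpow_one]
  have hlhs : p₁ ^ lam * p₂ ^ (1 - lam) = C * τ ^ lam := by
    rw [hp₂pow, hp₁def, ← mul_assoc, mul_comm ((a * τ / lam) ^ lam) C, mul_assoc,
      ← Real.mul_rpow (by positivity) (by positivity)]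
    congr 2
    field_simp
  have hrhs : lam * p₁ = a * τ := by rw [hp₁def]; field_simp
  rw [hlhs, hrhs] at key
  exact key

lemma young_const (lam c2 gam C E : ℝ) (h0 : 0 < lam) (h1 : lam < 1) (hc2 : 0 < c2)
    (hC : 0 < C) (hE : 0 < E) (he' : 0 < gam * lam + lam - 1)
    (hEA : E ≤ (2 * ((1 - lam) * (lam / c2) ^ (lam / (1 - lam)))) ^
        (-((1 - lam) / (gam * lam + lam - 1))) * C ^ (-(1 / (gam * lam + lam - 1)))) :
    ∀ τ : ℝ, 0 < τ → C * τ ^ lam ≤ c2 / E ^ gam * τ + E / 2 := by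
  intro τ hτ
  have h1l : (0:ℝ) < 1 - lam := by linarith
  set e' : ℝ := gam * lam + lam - 1 with he'def
  set s : ℝ := 1 / (1 - lam) with hsdef
  have hs : 0 < s := by positivity
  set cstar : ℝ := (1 - lam) * (lam / c2) ^ (lam / (1 - lam)) with hcstar
  have hlc2 : (0:ℝ) < lam / c2 := by positivity
  have hcstarpos : 0 < cstar := by positivity
  set A : ℝ := (2 * cstar) ^ (-((1 - lam) / e')) with hA
  have hApos : 0 < A := Real.rpow_pos_of_pos (by positivity) _
  have hEgam : (0:ℝ) < E ^ gam := Real.rpow_pos_of_pos hE _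
  set a : ℝ := c2 / E ^ gam with hadef
  have ha : 0 < a := by positivity
  have key := young_aux_s6 lam a C τ h0 h1 ha hC hτ
  have hM : (1 - lam) * (C * (lam / a) ^ lam) ^ (1 / (1 - lam)) ≤ E / 2 := by
    have hla : lam / a = (lam / c2) * E ^ gam := by
      rw [hadef]; field_simp
    have h2 : (lam / a) ^ lam = (lam / c2) ^ lam * E ^ (gam * lam) := by
      rw [hla, Real.mul_rpow hlc2.le hEgam.le, Real.rpow_mul hE.le]
    have h3 : (C * (lam / a) ^ lam) ^ s
        = C ^ s * ((lam / c2) ^ (lam / (1 - lam))) * E ^ (gam * lam * s) := by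
      rw [h2, ← mul_assoc, Real.mul_rpow (by positivity) (by positivity),
        Real.mul_rpow hC.le (by positivity), ← Real.rpow_mul hlc2.le,
        ← Real.rpow_mul hE.le]
      have : lam * s = lam / (1 - lam) := by rw [hsdef]; ring
      rw [this]
    have h4 : E ^ (gam * lam * s) = E ^ (e' * s) * E := by
      have : gam * lam * s = e' * s + 1 := by
        rw [hsdef, he'def]; field_simp; ring
      rw [this, Real.rpow_add hE, Real.rpow_one]
    have h5 : C ^ s * E ^ (e' * s) = (C ^ (1 / e') * E) ^ (e' * s) := by
      rw [Real.mul_rpow (by positivity) hE.le, ← Real.rpow_mul hC.le]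
      have : 1 / e' * (e' * s) = s := by field_simp
      rw [this]
    have hCE : C ^ (1 / e') * E ≤ A := by
      have hC1 : (0:ℝ) < C ^ (1 / e') := Real.rpow_pos_of_pos hC _
      calc C ^ (1 / e') * E ≤ C ^ (1 / e') * (A * C ^ (-(1 / e'))) :=
            mul_le_mul_of_nonneg_left hEA hC1.le
        _ = A * (C ^ (1 / e') * C ^ (-(1 / e'))) := by ring
        _ = A := by rw [← Real.rpow_add hC]; simp
    have h6 : (C ^ (1 / e') * E) ^ (e' * s) ≤ (2 * cstar)⁻¹ := by
      have h7 : (C ^ (1 / e') * E) ^ (e' * s) ≤ A ^ (e' * s) :=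
        Real.rpow_le_rpow (by positivity) hCE (by positivity)
      have h8 : A ^ (e' * s) = (2 * cstar)⁻¹ := by
        rw [hA, ← Real.rpow_mul (by positivity)]
        have : -((1 - lam) / e') * (e' * s) = -1 := by
          rw [hsdef]; field_simp
        rw [this, Real.rpow_neg_one]
      linarith [h7, h8.le, h8.ge]
    calc (1 - lam) * (C * (lam / a) ^ lam) ^ (1 / (1 - lam))
        = (1 - lam) * ((lam / c2) ^ (lam / (1 - lam))) * ((C ^ (1 / e') * E) ^ (e' * s)) * E := by
          rw [← hsdef, h3, h4, ← h5]; ring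
      _ = cstar * ((C ^ (1 / e') * E) ^ (e' * s)) * E := by rw [hcstar]
      _ ≤ cstar * (2 * cstar)⁻¹ * E := by
          have : cstar * ((C ^ (1 / e') * E) ^ (e' * s)) ≤ cstar * (2 * cstar)⁻¹ :=
            mul_le_mul_of_nonneg_left h6 hcstarpos.le
          exact mul_le_mul_of_nonneg_right this hE.le
      _ = E / 2 := by field_simp
  linarith [key, hM]

lemma barrier_aux (lam c2 gam ystar C h E : ℝ) (N : ℕ)
    (hc2 : 0 < c2) (hgam : 0 < gam) (hh : 0 < h)
    (hE : 0 < E) (hEy : E ≤ ystar)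
    (D a G : ℕ → ℝ)
    (hpos : ∀ k ≤ N, 0 < D k)
    (hD0 : E ≤ D 0)
    (hrec : ∀ k < N, D (k + 1) = D k + a (k + 1) * h + (G (k + 1) - G k))
    (hG : ∀ i ≤ N, ∀ j ≤ N, i ≤ j → |G j - G i| ≤ C * (((j : ℝ) - (i : ℝ)) * h) ^ lam)
    (ha : ∀ k, 1 ≤ k → k ≤ N → D k ≤ ystar → c2 / (D k) ^ gam ≤ a k)
    (hyoung : ∀ τ : ℝ, 0 < τ → C * τ ^ lam ≤ c2 / E ^ gam * τ + E / 2) :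
    ∀ n ≤ N, E / 2 ≤ D n := by
  classical
  intro n hn
  set P : ℕ → Prop := fun k => E ≤ D k with hP
  set m : ℕ := Nat.findGreatest P n with hm
  have hmn : m ≤ n := Nat.findGreatest_le n
  have hPm : P m := Nat.findGreatest_spec (Nat.zero_le n) hD0
  rcases eq_or_lt_of_le hmn with heq | hlt
  · have : E ≤ D n := heq ▸ hPm
    linarith
  · have hsmall : ∀ k, m < k → k ≤ n → D k < E := by
      intro k hk1 hk2
      have := Nat.findGreatest_is_greatest (hm ▸ hk1) hk2
      simp only [hP, not_le] at this
      exact this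
    have hstep : ∀ k, m < k → k ≤ n → c2 / E ^ gam ≤ a k := by
      intro k hk1 hk2
      have hkN : k ≤ N := le_trans hk2 hn
      have hDk : 0 < D k := hpos k hkN
      have hDkE : D k < E := hsmall k hk1 hk2
      have := ha k (by omega) hkN (le_trans hDkE.le hEy)
      refine le_trans ?_ this
      have : D k ^ gam ≤ E ^ gam := Real.rpow_le_rpow hDk.le hDkE.le hgam.le
      exact div_le_div_of_nonneg_left hc2.le (Real.rpow_pos_of_pos hDk _) this
    have htel : ∀ j, m ≤ j → j ≤ n →
        D m + (j - m : ℝ) * (c2 / E ^ gam * h) + (G j - G m) ≤ D j := by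
      intro j hj1 hj2
      induction j, hj1 using Nat.le_induction with
      | base => simp
      | succ j hmj ih =>
        have hjn : j ≤ n := by omega
        have hjN : j < N := by omega
        have ihh := ih hjn
        have hstepj := hstep (j + 1) (by omega) hj2
        have hrecj := hrec j hjN
        have : c2 / E ^ gam * h ≤ a (j + 1) * h :=
          mul_le_mul_of_nonneg_right hstepj hh.le
        push_cast
        push_cast at ihh
        nlinarith [ihh, this]
    have htn := htel n hmn le_rfl
    have hτ : (0:ℝ) < ((n:ℝ) - (m:ℝ)) * h := by
      have : (m:ℝ) < (n:ℝ) := by exact_mod_cast hlt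
      nlinarith
    have hGb := hG m (le_trans hmn hn) n hn hmn
    have hGlow : -(C * (((n:ℝ) - (m:ℝ)) * h) ^ lam) ≤ G n - G m := by
      have := abs_le.mp hGb
      linarith [this.1]
    have hy := hyoung _ hτ
    have : E + (n - m : ℝ) * (c2 / E ^ gam * h) - C * (((n:ℝ) - (m:ℝ)) * h) ^ lam ≤ D n := by
      calc E + (n - m : ℝ) * (c2 / E ^ gam * h) - C * (((n:ℝ) - (m:ℝ)) * h) ^ lam
          ≤ D m + (n - m : ℝ) * (c2 / E ^ gam * h) + (G n - G m) := by
            have : E ≤ D m := hPm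
            linarith
        _ ≤ D n := htn
    nlinarith [this, hy]

set_option maxHeartbeats 1600000 in
theorem stmt_6
    (T lam : ℝ) (hT : 0 < T) (hlam : lam ∈ Set.Ioo (0:ℝ) 1)
    (phi psi : ℝ → ℝ) (K : ℝ) (hK : 0 < K)
    (hphiH : ∀ s ∈ Set.Icc (0:ℝ) T, ∀ t ∈ Set.Icc (0:ℝ) T, |phi t - phi s| ≤ K * |t - s| ^ lam)
    (hpsiH : ∀ s ∈ Set.Icc (0:ℝ) T, ∀ t ∈ Set.Icc (0:ℝ) T, |psi t - psi s| ≤ K * |t - s| ^ lam)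
    (hphipsi : ∀ t ∈ Set.Icc (0:ℝ) T, phi t < psi t)
    (b : ℝ → ℝ → ℝ) (c1 p c2 ystar gam : ℝ)
    (hc1 : 0 < c1) (hp : 1 < p) (hc2 : 0 < c2) (hystar : 0 < ystar)
    (hgam : 1 / lam - 1 < gam)
    (hB2cont : ContinuousOn (fun q : ℝ × ℝ => b q.1 q.2)
      {q : ℝ × ℝ | q.1 ∈ Set.Icc (0:ℝ) T ∧ phi q.1 < q.2 ∧ q.2 < psi q.1})
    (hB2lip : ∀ ε : ℝ, 0 < ε → ε < min 1 ((⨆ t : Set.Icc (0:ℝ) T, |psi t.1 - phi t.1|) / 2) →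
      ∀ t1 ∈ Set.Icc (0:ℝ) T, ∀ t2 ∈ Set.Icc (0:ℝ) T, ∀ y1 y2 : ℝ,
        phi t1 + ε < y1 → y1 < psi t1 - ε → phi t2 + ε < y2 → y2 < psi t2 - ε →
        |b t1 y1 - b t2 y2| ≤ c1 / ε ^ p * (|y1 - y2| + |t1 - t2| ^ lam))
    (hB3low : ∀ t ∈ Set.Icc (0:ℝ) T, ∀ y : ℝ, phi t < y → y ≤ phi t + ystar → y < psi t →
      c2 / (y - phi t) ^ gam ≤ b t y)
    (hB3up : ∀ t ∈ Set.Icc (0:ℝ) T, ∀ y : ℝ, psi t - ystar ≤ y → y < psi t → phi t < y →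
      b t y ≤ -(c2 / (psi t - y) ^ gam))
    (Y0 : ℝ) (hB1 : phi 0 < Y0 ∧ Y0 < psi 0)
    (bp : ℝ → ℝ → ℝ) (c3 : ℝ) (hc3 : 0 < c3)
    (hB4deriv : ∀ t ∈ Set.Icc (0:ℝ) T, ∀ y : ℝ, phi t < y → y < psi t →
      HasDerivAt (fun x => b t x) (bp t y) y)
    (hB4cont : ContinuousOn (fun q : ℝ × ℝ => bp q.1 q.2)
      {q : ℝ × ℝ | q.1 ∈ Set.Icc (0:ℝ) T ∧ phi q.1 < q.2 ∧ q.2 < psi q.1})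
    (hB4lt : ∀ t ∈ Set.Icc (0:ℝ) T, ∀ y : ℝ, phi t < y → y < psi t → bp t y < c3)
    :
    ∃ L1 L2 : ℝ, 0 < L1 ∧ 0 < L2 ∧
      ∀ (Z : ℝ → ℝ) (Lam : ℝ), 0 < Lam → Z 0 = 0 →
        (∀ s ∈ Set.Icc (0:ℝ) T, ∀ t ∈ Set.Icc (0:ℝ) T, |Z t - Z s| ≤ Lam * |t - s| ^ lam) →
        ∀ N : ℕ, 0 < N → c3 * (T / (N : ℝ)) < 1 →
        ∀ Yh : ℕ → ℝ, Yh 0 = Y0 →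
          (∀ k : ℕ, k < N →
            phi (((k : ℝ) + 1) * T / (N : ℝ)) < Yh (k + 1) ∧
            Yh (k + 1) < psi (((k : ℝ) + 1) * T / (N : ℝ)) ∧
            Yh (k + 1) = Yh k + b (((k : ℝ) + 1) * T / (N : ℝ)) (Yh (k + 1)) * (T / (N : ℝ))
              + (Z (((k : ℝ) + 1) * T / (N : ℝ)) - Z ((k : ℝ) * T / (N : ℝ)))) →
          ∀ n : ℕ, n ≤ N →
            phi ((n : ℝ) * T / (N : ℝ)) + L1 / (L2 + Lam) ^ (1 / (gam * lam + lam - 1)) ≤ Yh n ∧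
            Yh n ≤ psi ((n : ℝ) * T / (N : ℝ)) - L1 / (L2 + Lam) ^ (1 / (gam * lam + lam - 1)) := by
  obtain ⟨hlam0, hlam1⟩ := hlam
  have h1l : (0:ℝ) < 1 - lam := by linarith
  have hlaminv : lam * (1 / lam) = 1 := mul_one_div_cancel hlam0.ne'
  have hgam0 : 0 < gam := by nlinarith
  have he' : 0 < gam * lam + lam - 1 := by nlinarith
  have hd0 : 0 < Y0 - phi 0 := by linarith [hB1.1]
  have hd0' : 0 < psi 0 - Y0 := by linarith [hB1.2]
  set d0 : ℝ := Y0 - phi 0 with hd0def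
  set d0' : ℝ := psi 0 - Y0 with hd0'def
  set cstar : ℝ := (1 - lam) * (lam / c2) ^ (lam / (1 - lam)) with hcstardef
  have hcstar : 0 < cstar := by
    have : (0:ℝ) < (lam / c2) ^ (lam / (1 - lam)) := Real.rpow_pos_of_pos (by positivity) _
    positivity
  set A : ℝ := (2 * cstar) ^ (-((1 - lam) / (gam * lam + lam - 1))) with hAdef
  have hA : 0 < A := Real.rpow_pos_of_pos (by positivity) _
  set mn : ℝ := min (min d0 d0') ystar with hmndef
  have hmn : 0 < mn := lt_min (lt_min hd0 hd0') hystar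
  have hKe : (0:ℝ) < K ^ (1 / (gam * lam + lam - 1)) := Real.rpow_pos_of_pos hK _
  set L1 : ℝ := min A (mn * K ^ (1 / (gam * lam + lam - 1))) / 2 with hL1def
  have hL1 : 0 < L1 := by
    have : 0 < min A (mn * K ^ (1 / (gam * lam + lam - 1))) := lt_min hA (by positivity)
    positivity
  refine ⟨L1, K, hL1, hK, ?_⟩
  intro Z Lam hLam hZ0 hZH N hN hc3N Yh hY0 hsch
  have hNpos : (0:ℝ) < (N:ℝ) := by exact_mod_cast hN
  set dt : ℝ := T / (N:ℝ) with hdtdef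
  have hdt : 0 < dt := by positivity
  set Cc : ℝ := K + Lam with hCcdef
  have hCc : 0 < Cc := by positivity
  set tg : ℕ → ℝ := fun k => (k:ℝ) * T / (N:ℝ) with htgdef
  have htg0 : tg 0 = 0 := by simp [htgdef]
  have htgmem : ∀ k ≤ N, tg k ∈ Set.Icc (0:ℝ) T := by
    intro k hk
    constructor
    · simp only [htgdef]; positivity
    · simp only [htgdef]
      rw [div_le_iff₀ hNpos]
      have : (k:ℝ) ≤ (N:ℝ) := by exact_mod_cast hk
      nlinarith
  have htgdiff : ∀ i j : ℕ, tg j - tg i = ((j:ℝ) - (i:ℝ)) * dt := by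
    intro i j; simp only [htgdef, hdtdef]; ring
  -- converted scheme hypotheses
  have hsch1 : ∀ k, k < N → phi (tg (k+1)) < Yh (k+1) := by
    intro k hk
    have := (hsch k hk).1
    simp only [htgdef]
    push_cast
    exact this
  have hsch2 : ∀ k, k < N → Yh (k+1) < psi (tg (k+1)) := by
    intro k hk
    have := (hsch k hk).2.1
    simp only [htgdef]
    push_cast
    exact this
  have hsch3 : ∀ k, k < N →
      Yh (k+1) = Yh k + b (tg (k+1)) (Yh (k+1)) * dt + (Z (tg (k+1)) - Z (tg k)) := by
    intro k hk
    have := (hsch k hk).2.2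
    simp only [htgdef, hdtdef]
    push_cast
    exact this
  -- the margin E
  set E : ℝ := min (min d0 d0')
      (min ystar (A * Cc ^ (-(1 / (gam * lam + lam - 1))))) with hEdef
  have hq : 0 < A * Cc ^ (-(1 / (gam * lam + lam - 1))) := by
    have : (0:ℝ) < Cc ^ (-(1 / (gam * lam + lam - 1))) := Real.rpow_pos_of_pos hCc _
    positivity
  have hE : 0 < E := lt_min (lt_min hd0 hd0') (lt_min hystar hq)
  have hEy : E ≤ ystar := le_trans (min_le_right _ _) (min_le_left _ _)
  have hEA : E ≤ A * Cc ^ (-(1 / (gam * lam + lam - 1))) :=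
    le_trans (min_le_right _ _) (min_le_right _ _)
  have hyoung : ∀ τ : ℝ, 0 < τ → Cc * τ ^ lam ≤ c2 / E ^ gam * τ + E / 2 := by
    refine young_const lam c2 gam Cc E hlam0 hlam1 hc2 hCc hE he' ?_
    rw [← hcstardef, ← hAdef]
    exact hEA
  -- noise-plus-barrier Hölder bounds
  have hGgen : ∀ (F : ℝ → ℝ),
      (∀ s ∈ Set.Icc (0:ℝ) T, ∀ t ∈ Set.Icc (0:ℝ) T, |F t - F s| ≤ K * |t - s| ^ lam) →
      ∀ i ≤ N, ∀ j ≤ N, i ≤ j →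
      |(Z (tg j) - F (tg j)) - (Z (tg i) - F (tg i))| ≤ Cc * (((j:ℝ) - (i:ℝ)) * dt) ^ lam := by
    intro F hF i hi j hj hij
    have hmi := htgmem i hi
    have hmj := htgmem j hj
    have hZb := hZH (tg i) hmi (tg j) hmj
    have hFb := hF (tg i) hmi (tg j) hmj
    have hnn : (0:ℝ) ≤ ((j:ℝ) - (i:ℝ)) * dt := by
      have : (i:ℝ) ≤ (j:ℝ) := by exact_mod_cast hij
      exact mul_nonneg (by linarith) hdt.le
    have habs : |tg j - tg i| = ((j:ℝ) - (i:ℝ)) * dt := by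
      rw [htgdiff i j, abs_of_nonneg hnn]
    rw [habs] at hZb hFb
    have htri : |(Z (tg j) - F (tg j)) - (Z (tg i) - F (tg i))|
        ≤ |Z (tg j) - Z (tg i)| + |F (tg j) - F (tg i)| := by
      have heq : (Z (tg j) - F (tg j)) - (Z (tg i) - F (tg i))
          = (Z (tg j) - Z (tg i)) - (F (tg j) - F (tg i)) := by ring
      rw [heq]
      exact abs_sub _ _
    have : Cc * (((j:ℝ) - (i:ℝ)) * dt) ^ lam
        = Lam * (((j:ℝ) - (i:ℝ)) * dt) ^ lam + K * (((j:ℝ) - (i:ℝ)) * dt) ^ lam := by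
      rw [hCcdef]; ring
    linarith
  -- lower barrier
  have hposL : ∀ k ≤ N, 0 < Yh k - phi (tg k) := by
    intro k hk
    cases k with
    | zero => rw [htg0, hY0]; linarith [hB1.1]
    | succ j => have := hsch1 j (by omega); linarith
  have hlowAll : ∀ n ≤ N, E / 2 ≤ Yh n - phi (tg n) := by
    refine barrier_aux lam c2 gam ystar Cc dt E N hc2 hgam0 hdt hE hEy
      (fun k => Yh k - phi (tg k)) (fun k => b (tg k) (Yh k))
      (fun k => Z (tg k) - phi (tg k)) hposL ?_ ?_ ?_ ?_ hyoung
    · show E ≤ Yh 0 - phi (tg 0)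
      rw [htg0, hY0]
      exact le_trans (min_le_left _ _) (min_le_left _ _)
    · intro k hk
      have := hsch3 k hk
      linarith
    · intro i hi j hj hij
      exact hGgen phi hphiH i hi j hj hij
    · intro k h1k hkN hy
      obtain ⟨j, rfl⟩ : ∃ j, k = j + 1 := ⟨k - 1, by omega⟩
      have hj : j < N := by omega
      have h1 := hsch1 j hj
      have h2 := hsch2 j hj
      exact hB3low (tg (j+1)) (htgmem _ hkN) (Yh (j+1)) h1 (by linarith) h2
  -- upper barrier
  have hposU : ∀ k ≤ N, 0 < psi (tg k) - Yh k := by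
    intro k hk
    cases k with
    | zero => rw [htg0, hY0]; linarith [hB1.2]
    | succ j => have := hsch2 j (by omega); linarith
  have hGU : ∀ i ≤ N, ∀ j ≤ N, i ≤ j →
      |(psi (tg j) - Z (tg j)) - (psi (tg i) - Z (tg i))|
        ≤ Cc * (((j:ℝ) - (i:ℝ)) * dt) ^ lam := by
    intro i hi j hj hij
    have := hGgen psi hpsiH i hi j hj hij
    have heq : |(psi (tg j) - Z (tg j)) - (psi (tg i) - Z (tg i))|
        = |(Z (tg j) - psi (tg j)) - (Z (tg i) - psi (tg i))| := by
      rw [← abs_neg]; congr 1; ring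
    rw [heq]
    exact this
  have hupAll : ∀ n ≤ N, E / 2 ≤ psi (tg n) - Yh n := by
    refine barrier_aux lam c2 gam ystar Cc dt E N hc2 hgam0 hdt hE hEy
      (fun k => psi (tg k) - Yh k) (fun k => -(b (tg k) (Yh k)))
      (fun k => psi (tg k) - Z (tg k)) hposU ?_ ?_ hGU ?_ hyoung
    · show E ≤ psi (tg 0) - Yh 0
      rw [htg0, hY0]
      exact le_trans (min_le_left _ _) (min_le_right _ _)
    · intro k hk
      have := hsch3 k hk
      linarith
    · intro k h1k hkN hy
      obtain ⟨j, rfl⟩ : ∃ j, k = j + 1 := ⟨k - 1, by omega⟩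
      have hj : j < N := by omega
      have h1 := hsch1 j hj
      have h2 := hsch2 j hj
      have := hB3up (tg (j+1)) (htgmem _ hkN) (Yh (j+1)) (by linarith) h2 h1
      linarith
  -- margin comparison
  have hCe : (0:ℝ) < Cc ^ (1 / (gam * lam + lam - 1)) := Real.rpow_pos_of_pos hCc _
  have hKC : K ^ (1 / (gam * lam + lam - 1)) ≤ Cc ^ (1 / (gam * lam + lam - 1)) :=
    Real.rpow_le_rpow hK.le (by rw [hCcdef]; linarith) (by positivity)
  have hmarg : L1 / Cc ^ (1 / (gam * lam + lam - 1)) ≤ E / 2 := by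
    set X : ℝ := Cc ^ (1 / (gam * lam + lam - 1)) with hXdef
    have h2L1 : 2 * L1 = min A (mn * K ^ (1 / (gam * lam + lam - 1))) := by
      rw [hL1def]; ring
    have hL1mn : 2 * L1 ≤ mn * K ^ (1 / (gam * lam + lam - 1)) := by
      rw [h2L1]; exact min_le_right _ _
    have hL1A : 2 * L1 ≤ A := by rw [h2L1]; exact min_le_left _ _
    have hgen : ∀ r : ℝ, 0 < r → mn ≤ r → 2 * (L1 / X) ≤ r := by
      intro r hr hmnr
      rw [show 2 * (L1 / X) = 2 * L1 / X by ring, div_le_iff₀ hCe]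
      calc 2 * L1 ≤ mn * K ^ (1 / (gam * lam + lam - 1)) := hL1mn
        _ ≤ r * K ^ (1 / (gam * lam + lam - 1)) := by
            exact mul_le_mul_of_nonneg_right hmnr hKe.le
        _ ≤ r * X := mul_le_mul_of_nonneg_left hKC hr.le
    have ht1 : 2 * (L1 / X) ≤ d0 := hgen d0 hd0 (le_trans (min_le_left _ _) (min_le_left _ _))
    have ht2 : 2 * (L1 / X) ≤ d0' := hgen d0' hd0' (le_trans (min_le_left _ _) (min_le_right _ _))
    have ht3 : 2 * (L1 / X) ≤ ystar := hgen ystar hystar (min_le_right _ _)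
    have ht4 : 2 * (L1 / X) ≤ A * Cc ^ (-(1 / (gam * lam + lam - 1))) := by
      have hXinv : A * Cc ^ (-(1 / (gam * lam + lam - 1))) = A / X := by
        rw [hXdef, Real.rpow_neg hCc.le]
        ring
      rw [hXinv, show 2 * (L1 / X) = 2 * L1 / X by ring]
      exact (div_le_div_iff_of_pos_right hCe).mpr hL1A
    have hElow : 2 * (L1 / X) ≤ E := le_min (le_min ht1 ht2) (le_min ht3 ht4)
    linarith
  intro n hn
  have hlow := hlowAll n hn
  have hup := hupAll n hn
  simp only [htgdef] at hlow hup
  constructor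
  · linarith
  · linarith
end
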